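/- arXiv:2305.19293 — 4 statements merged into one kernel-verified Lean document; each statement's English description precedes it below -/
import Mathlib

section
/- Let γ : [0,∞) → ℝ be continuous with γ(0) = 0, and let γ_e : ℝ → ℝ denote its even extension γ_e(u) = γ(|u|). For ε > 0 define W_ε(t) = (1/(8ε²)) ( ∫_t^{t+2ε} γ_e(u) du − ∫_{t−2ε}^{t} γ_e(u) du ) for t ≥ 0. Then for every τ > 0, lim_{ε→0⁺} ∫₀^τ W_ε(t) dt = (1/2) γ(τ). -/
open MeasureTheory Filter

private lemma second_diff_tendsto (f : ℝ → ℝ) (hf : Continuous f) (x : ℝ) :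
    Tendsto (fun h : ℝ => (1 / h ^ 2) *
      ((∫ s in x..(x + h), ∫ u in (0:ℝ)..s, f u) -
       ∫ s in (x - h)..x, ∫ u in (0:ℝ)..s, f u))
      (nhdsWithin 0 (Set.Ioi 0)) (nhds (f x)) := by
  set G : ℝ → ℝ := fun t => ∫ u in (0:ℝ)..t, f u with hGdef
  have hfi : ∀ a b : ℝ, IntervalIntegrable f volume a b := fun a b =>
    hf.intervalIntegrable a b
  have hGc : Continuous G := intervalIntegral.continuous_primitive hfi 0
  rw [Metric.tendsto_nhdsWithin_nhds]
  intro ε hε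
  obtain ⟨η, hη, hclose⟩ := Metric.continuousAt_iff.1 hf.continuousAt (ε/4) (by linarith)
  refine ⟨η, hη, fun h hh hdist => ?_⟩
  have hh0 : 0 < h := hh
  rw [Real.dist_eq, sub_zero] at hdist
  have hhη : h < η := lt_of_abs_lt hdist
  have e1 : (∫ s in x..(x + h), G s) = ∫ s in (0:ℝ)..h, G (x + s) := by
    rw [intervalIntegral.integral_comp_add_left G x, add_zero]
  have e2 : (∫ s in (x - h)..x, G s) = ∫ s in (0:ℝ)..h, G (x - s) := by
    rw [intervalIntegral.integral_comp_sub_left G x, sub_zero]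
  have int1 : IntervalIntegrable (fun s => G (x + s)) volume 0 h :=
    (hGc.comp (continuous_const.add continuous_id)).intervalIntegrable 0 h
  have int2 : IntervalIntegrable (fun s => G (x - s)) volume 0 h :=
    (hGc.comp (continuous_const.sub continuous_id)).intervalIntegrable 0 h
  have int3 : IntervalIntegrable (fun s => 2 * f x * s) volume 0 h :=
    (continuous_const.mul continuous_id).intervalIntegrable 0 h
  have key : (∫ s in x..(x + h), G s) - (∫ s in (x - h)..x, G s)
      = (∫ s in (0:ℝ)..h, (G (x + s) - G (x - s) - 2 * f x * s)) + f x * h ^ 2 := by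
    rw [e1, e2, intervalIntegral.integral_sub (int1.sub int2) int3,
      intervalIntegral.integral_sub int1 int2]
    have : (∫ s in (0:ℝ)..h, 2 * f x * s) = f x * h ^ 2 := by
      rw [intervalIntegral.integral_const_mul, integral_id]
      ring
    rw [this]; ring
  have bound : ∀ s ∈ Set.uIoc (0:ℝ) h, ‖G (x + s) - G (x - s) - 2 * f x * s‖ ≤ (ε/2) * h := by
    intro s hs
    rw [Set.uIoc_of_le hh0.le] at hs
    obtain ⟨hs0, hsh⟩ := hs
    have hG : G (x + s) - G (x - s) = ∫ u in (x - s)..(x + s), f u :=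
      intervalIntegral.integral_interval_sub_left (hfi 0 (x + s)) (hfi 0 (x - s))
    have hconst : 2 * f x * s = ∫ _ in (x - s)..(x + s), f x := by
      rw [intervalIntegral.integral_const]; ring_nf
    rw [hG, hconst, ← intervalIntegral.integral_sub (hfi _ _)
      (intervalIntegrable_const)]
    have : ‖∫ u in (x - s)..(x + s), (f u - f x)‖ ≤ (ε/4) * |(x + s) - (x - s)| := by
      apply intervalIntegral.norm_integral_le_of_norm_le_const
      intro u hu
      rw [Set.uIoc_of_le (by linarith)] at hu
      have : dist u x < η := by
        rw [Real.dist_eq]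
        rw [abs_lt]
        constructor <;> [nlinarith [hu.1]; nlinarith [hu.2]]
      exact (le_of_lt (hclose this))
    calc ‖∫ u in (x - s)..(x + s), (f u - f x)‖ ≤ (ε/4) * |(x + s) - (x - s)| := this
      _ = (ε/4) * (2 * s) := by rw [abs_of_nonneg (by linarith : (0:ℝ) ≤ (x+s)-(x-s))]; ring_nf
      _ ≤ (ε/2) * h := by nlinarith
  have ibound : ‖∫ s in (0:ℝ)..h, (G (x + s) - G (x - s) - 2 * f x * s)‖ ≤ (ε/2) * h * |h - 0| :=
    intervalIntegral.norm_integral_le_of_norm_le_const bound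
  rw [sub_zero, abs_of_pos hh0] at ibound
  rw [Real.dist_eq, key]
  have hh2 : (0:ℝ) < h ^ 2 := by positivity
  have : 1 / h ^ 2 * ((∫ s in (0:ℝ)..h, (G (x + s) - G (x - s) - 2 * f x * s)) + f x * h ^ 2)
      - f x = (∫ s in (0:ℝ)..h, (G (x + s) - G (x - s) - 2 * f x * s)) / h ^ 2 := by
    rw [one_div, mul_add, div_eq_inv_mul, mul_comm (f x), inv_mul_cancel_left₀ hh2.ne', add_sub_cancel_right]
  rw [this, abs_div, abs_of_pos hh2, div_lt_iff₀ hh2]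
  calc |∫ s in (0:ℝ)..h, (G (x + s) - G (x - s) - 2 * f x * s)| ≤ ε/2 * h * h := ibound
    _ < ε * h ^ 2 := by nlinarith

/-- Let `γ : [0,∞) → ℝ` be continuous with `γ(0) = 0`, with even extension
`γ_e(u) = γ(|u|)`, and for `ε > 0` put
`W_ε(t) = (1/(8ε²)) (∫_t^{t+2ε} γ_e - ∫_{t-2ε}^t γ_e)`. Then for every `τ > 0`,
`∫₀^τ W_ε(t) dt → (1/2) γ(τ)` as `ε → 0⁺`. -/
theorem window_average_tendsto_half_variance
    (γ : ℝ → ℝ) (hcont : ContinuousOn γ (Set.Ici 0)) (hγ0 : γ 0 = 0)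
    (τ : ℝ) (hτ : 0 < τ) :
    Tendsto
      (fun ε : ℝ => ∫ t in (0:ℝ)..τ,
        (1 / (8 * ε ^ 2)) *
          ((∫ u in t..(t + 2 * ε), γ |u|) - ∫ u in (t - 2 * ε)..t, γ |u|))
      (nhdsWithin 0 (Set.Ioi 0)) (nhds ((1 / 2) * γ τ)) := by
  set f : ℝ → ℝ := fun u => γ |u| with hfdef
  have hf : Continuous f := hcont.comp_continuous continuous_abs (fun u => abs_nonneg u)
  have hfi : ∀ a b : ℝ, IntervalIntegrable f volume a b := fun a b =>
    hf.intervalIntegrable a b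
  set G : ℝ → ℝ := fun t => ∫ u in (0:ℝ)..t, f u with hGdef
  have gdef : ∀ s : ℝ, G s = ∫ u in (0:ℝ)..s, f u := fun s => rfl
  have hGc : Continuous G := intervalIntegral.continuous_primitive hfi 0
  have hGi : ∀ a b : ℝ, IntervalIntegrable G volume a b := fun a b =>
    hGc.intervalIntegrable a b
  have h2 : Tendsto (fun ε : ℝ => 2 * ε) (nhdsWithin 0 (Set.Ioi 0))
      (nhdsWithin 0 (Set.Ioi 0)) := by
    rw [tendsto_nhdsWithin_iff]
    constructor
    · have : Tendsto (fun ε : ℝ => 2 * ε) (nhds 0) (nhds (2 * 0)) :=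
        (continuous_const.mul continuous_id).tendsto 0
      simpa using this.mono_left nhdsWithin_le_nhds
    · filter_upwards [self_mem_nhdsWithin] with ε (hε : ε ∈ Set.Ioi 0)
      exact Set.mem_Ioi.2 (by linarith [Set.mem_Ioi.1 hε])
  have hA := (second_diff_tendsto f hf τ).comp h2
  have hB := (second_diff_tendsto f hf 0).comp h2
  have lim := (hA.sub hB).const_mul (1/2 : ℝ)
  have hfτ : f τ = γ τ := by rw [hfdef]; simp [abs_of_pos hτ]
  have hf0 : f 0 = 0 := by rw [hfdef]; simp [hγ0]
  rw [show (1/2 : ℝ) * γ τ = 1/2 * (f τ - f 0) by rw [hfτ, hf0]; ring]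
  refine Tendsto.congr' ?_ lim
  filter_upwards [self_mem_nhdsWithin] with ε (hε : ε ∈ Set.Ioi 0)
  have hε0 : (0:ℝ) < ε := hε
  simp only [Function.comp_apply]
  simp only [← hGdef]
  -- pointwise second-difference identity
  have step1 : ∀ t : ℝ, (∫ u in t..(t + 2 * ε), f u) - (∫ u in (t - 2 * ε)..t, f u)
      = G (t + 2 * ε) - 2 * G t + G (t - 2 * ε) := by
    intro t
    have h1 := intervalIntegral.integral_interval_sub_left (hfi 0 (t + 2 * ε)) (hfi 0 t)
    have h2 := intervalIntegral.integral_interval_sub_left (hfi 0 t) (hfi 0 (t - 2 * ε))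
    simp only [gdef]
    rw [← h1, ← h2]; ring
  have i1 : IntervalIntegrable (fun t => G (t + 2 * ε)) volume 0 τ :=
    (hGc.comp (continuous_id.add continuous_const)).intervalIntegrable 0 τ
  have i2 : IntervalIntegrable (fun t => 2 * G t) volume 0 τ :=
    (continuous_const.mul hGc).intervalIntegrable 0 τ
  have i3 : IntervalIntegrable (fun t => G (t - 2 * ε)) volume 0 τ :=
    (hGc.comp (continuous_id.sub continuous_const)).intervalIntegrable 0 τ
  have t1 : (∫ t in (0:ℝ)..τ, G (t + 2 * ε)) = ∫ s in (2 * ε)..(τ + 2 * ε), G s := by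
    rw [intervalIntegral.integral_comp_add_right, zero_add]
  have t2 : (∫ t in (0:ℝ)..τ, G (t - 2 * ε)) = ∫ s in (0 - 2 * ε)..(τ - 2 * ε), G s := by
    rw [intervalIntegral.integral_comp_sub_right]
  have a1 := intervalIntegral.integral_add_adjacent_intervals (hGi (2 * ε) τ) (hGi τ (τ + 2 * ε))
  have a2 := intervalIntegral.integral_add_adjacent_intervals (hGi 0 (2 * ε)) (hGi (2 * ε) τ)
  have a3 := intervalIntegral.integral_add_adjacent_intervals (hGi (0 - 2 * ε) 0) (hGi 0 (τ - 2 * ε))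
  have a4 := intervalIntegral.integral_add_adjacent_intervals (hGi 0 (τ - 2 * ε)) (hGi (τ - 2 * ε) τ)
  have rhs : (∫ t in (0:ℝ)..τ,
        (1 / (8 * ε ^ 2)) * ((∫ u in t..(t + 2 * ε), f u) - ∫ u in (t - 2 * ε)..t, f u))
      = (1 / (8 * ε ^ 2)) *
        ((∫ s in (2 * ε)..(τ + 2 * ε), G s) - 2 * (∫ s in (0:ℝ)..τ, G s)
          + ∫ s in (0 - 2 * ε)..(τ - 2 * ε), G s) := by
    have : (∫ t in (0:ℝ)..τ,
          (1 / (8 * ε ^ 2)) * ((∫ u in t..(t + 2 * ε), f u) - ∫ u in (t - 2 * ε)..t, f u))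
        = ∫ t in (0:ℝ)..τ,
          (1 / (8 * ε ^ 2)) * (G (t + 2 * ε) - 2 * G t + G (t - 2 * ε)) := by
      apply intervalIntegral.integral_congr
      intro t _
      dsimp only
      rw [step1 t]
    rw [this, intervalIntegral.integral_const_mul,
      intervalIntegral.integral_add ((i1.sub i2)) i3,
      intervalIntegral.integral_sub i1 i2,
      intervalIntegral.integral_const_mul, t1, t2]
  rw [rhs]
  have hX : (∫ s in (2 * ε)..(τ + 2 * ε), G s) - 2 * (∫ s in (0:ℝ)..τ, G s)
        + (∫ s in (0 - 2 * ε)..(τ - 2 * ε), G s)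
      = ((∫ s in τ..(τ + 2 * ε), G s) - ∫ s in (τ - 2 * ε)..τ, G s)
        - ((∫ s in (0:ℝ)..(0 + 2 * ε), G s) - ∫ s in (0 - 2 * ε)..(0:ℝ), G s) := by
    rw [show (0:ℝ) + 2 * ε = 2 * ε by ring]
    linarith [a1, a2, a3, a4]
  rw [hX]
  ring
end

section
/- Let G be a real process on a probability space with square-integrable centered values, G_0 = 0 a.s., covariance-stationary increments E[(G_{u+h} − G_h)(G_{v+h} − G_h)] = E[G_u G_v] for all u,v,h ≥ 0, and variance function γ(t) = E[G_t²] of the form γ(t) = ∫₀^t g(u) du with g measurable and 0 ≤ g(u) ≤ C for a.e. u ≥ 0. For ε > 0 define the trace density 𝒱̇_ε(t) = (1/(4ε²)) ∫₀^t E[(G_{t+ε} − G_{(t−ε)₊})(G_{s+ε} − G_{(s−ε)₊})] ds, where (r)₊ = max(r,0). Then for every T > 0 and every continuous function φ : [0,T] → ℝ, lim_{ε→0⁺} ∫₀^T φ(t) 𝒱̇_ε(t) dt = (1/2) ∫₀^T φ(t) g(t) dt; i.e. the measures 𝒱̇_ε(t) dt converge weak-star to (1/2) g(t) dt = (1/2)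 dγ(t). -/
open MeasureTheory Filter Set intervalIntegral

namespace TraceAux


variable {g' : ℝ → ℝ} {C : ℝ}

noncomputable def gam (g' : ℝ → ℝ) (x : ℝ) : ℝ := ∫ u in (0:ℝ)..x, g' u

lemma habs (h0 : ∀ u, 0 ≤ g' u) (hC : ∀ u, g' u ≤ C) (u : ℝ) : |g' u| ≤ C := by
  rw [abs_of_nonneg (h0 u)]; exact hC u

lemma intInt (hm : Measurable g') (h0 : ∀ u, 0 ≤ g' u) (hC : ∀ u, g' u ≤ C) (a b : ℝ) :
    IntervalIntegrable g' volume a b := by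
  rw [intervalIntegrable_iff]
  refine Measure.integrableOn_of_bounded (M := C) (by simp [Set.uIoc]) hm.aestronglyMeasurable ?_
  exact Eventually.of_forall fun u => by
    simpa [Real.norm_eq_abs] using habs h0 hC u

lemma gam_sub (hm : Measurable g') (h0 : ∀ u, 0 ≤ g' u) (hC : ∀ u, g' u ≤ C) (x y : ℝ) :
    gam g' y - gam g' x = ∫ u in x..y, g' u :=
  integral_interval_sub_left (intInt hm h0 hC 0 y) (intInt hm h0 hC 0 x)

lemma gam_lip (hm : Measurable g') (h0 : ∀ u, 0 ≤ g' u) (hC : ∀ u, g' u ≤ C) (x y : ℝ) :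
    |gam g' y - gam g' x| ≤ C * |y - x| := by
  rw [gam_sub hm h0 hC, ← Real.norm_eq_abs]
  exact intervalIntegral.norm_integral_le_of_norm_le_const
    (fun u _ => by simpa [Real.norm_eq_abs] using habs h0 hC u)

lemma gam_mono (hm : Measurable g') (h0 : ∀ u, 0 ≤ g' u) (hC : ∀ u, g' u ≤ C)
    {x y : ℝ} (h : x ≤ y) : gam g' x ≤ gam g' y := by
  have : (0:ℝ) ≤ ∫ u in x..y, g' u := intervalIntegral.integral_nonneg h (fun u _ => h0 u)
  have h2 := gam_sub hm h0 hC x y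
  linarith

lemma gam_cont (hm : Measurable g') (h0 : ∀ u, 0 ≤ g' u) (hC : ∀ u, g' u ≤ C) :
    Continuous (gam g') := by
  have hC0 : 0 ≤ C := le_trans (h0 0) (hC 0)
  refine LipschitzWith.continuous (K := ⟨C, hC0⟩) (LipschitzWith.of_dist_le_mul fun x y => ?_)
  simp only [Real.dist_eq]
  exact gam_lip hm h0 hC y x

noncomputable def Gam (g' : ℝ → ℝ) (x : ℝ) : ℝ := ∫ u in (0:ℝ)..x, gam g' u

lemma Gam_cont (hm : Measurable g') (h0 : ∀ u, 0 ≤ g' u) (hC : ∀ u, g' u ≤ C) :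
    Continuous (Gam g') :=
  intervalIntegral.continuous_primitive
    (fun a b => ((gam_cont hm h0 hC).intervalIntegrable a b)) 0

lemma Gam_sub (hm : Measurable g') (h0 : ∀ u, 0 ≤ g' u) (hC : ∀ u, g' u ≤ C) (x y : ℝ) :
    Gam g' y - Gam g' x = ∫ u in x..y, gam g' u :=
  integral_interval_sub_left ((gam_cont hm h0 hC).intervalIntegrable 0 y)
    ((gam_cont hm h0 hC).intervalIntegrable 0 x)


lemma key_identity (hm : Measurable g') (h0 : ∀ u, 0 ≤ g' u) (hC : ∀ u, g' u ≤ C)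
    {ε t : ℝ} (hε : 0 < ε) (ht : 2*ε ≤ t) :
    ∫ s in (0:ℝ)..t, (gam g' (t+ε-max (s-ε) 0) + gam g' |max (t-ε) 0 - (s+ε)|
        - gam g' (t-s) - gam g' (max (t-ε) 0 - max (s-ε) 0))
      = ε*(gam g' (t+ε) - gam g' (t-ε))
        + ((Gam g' (t+ε) - Gam g' t) - (Gam g' (t-ε) - Gam g' (t-2*ε))) := by
  have hgc : Continuous (gam g') := gam_cont hm h0 hC
  have hat : max (t-ε) 0 = t-ε := max_eq_left (by linarith)
  have hεt : ε ≤ t := by linarith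
  have hc1 : Continuous fun s : ℝ => gam g' (t+ε-max (s-ε) 0) :=
    hgc.comp (continuous_const.sub ((continuous_id.sub continuous_const).max continuous_const))
  have hc2 : Continuous fun s : ℝ => gam g' |max (t-ε) 0 - (s+ε)| :=
    hgc.comp (continuous_const.sub (continuous_id.add continuous_const)).abs
  have hc3 : Continuous fun s : ℝ => gam g' (t-s) :=
    hgc.comp (continuous_const.sub continuous_id)
  have hc4 : Continuous fun s : ℝ => gam g' (max (t-ε) 0 - max (s-ε) 0) :=
    hgc.comp (continuous_const.sub ((continuous_id.sub continuous_const).max continuous_const))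
  have hJ1 : ∫ s in (0:ℝ)..t, gam g' (t+ε-max (s-ε) 0)
      = ε * gam g' (t+ε) + (Gam g' (t+ε) - Gam g' (2*ε)) := by
    rw [← integral_add_adjacent_intervals (a := (0:ℝ)) (b := ε) (c := t)
      (hc1.intervalIntegrable 0 ε) (hc1.intervalIntegrable ε t)]
    have e1 : ∫ s in (0:ℝ)..ε, gam g' (t+ε-max (s-ε) 0) = ε * gam g' (t+ε) := by
      rw [integral_congr (g := fun _ => gam g' (t+ε)) (fun s hs => ?_), intervalIntegral.integral_const]
      · simp
      · rw [uIcc_of_le hε.le] at hs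
        have : max (s-ε) 0 = 0 := max_eq_right (by linarith [hs.2])
        rw [this, sub_zero]
    have e2 : ∫ s in ε..t, gam g' (t+ε-max (s-ε) 0) = Gam g' (t+ε) - Gam g' (2*ε) := by
      rw [integral_congr (g := fun s => gam g' (t+2*ε-s)) (fun s hs => ?_)]
      · rw [intervalIntegral.integral_comp_sub_left (gam g') (t+2*ε)]
        rw [show t+2*ε-t = 2*ε by ring, show t+2*ε-ε = t+ε by ring,
          ← Gam_sub hm h0 hC]
      · rw [uIcc_of_le hεt] at hs
        have : max (s-ε) 0 = s-ε := max_eq_left (by linarith [hs.1])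
        rw [this]; ring_nf
    rw [e1, e2]
  have hJ2 : ∫ s in (0:ℝ)..t, gam g' |max (t-ε) 0 - (s+ε)|
      = Gam g' (t-2*ε) + Gam g' (2*ε) := by
    have hcongr : ∀ s : ℝ, gam g' |max (t-ε) 0 - (s+ε)| = gam g' |t-2*ε-s| := by
      intro s; rw [hat]; ring_nf
    simp only [hcongr]
    have hc2' : Continuous fun s : ℝ => gam g' |t-2*ε-s| :=
      hgc.comp (continuous_const.sub continuous_id).abs
    rw [← integral_add_adjacent_intervals (a := (0:ℝ)) (b := t-2*ε) (c := t)
      (hc2'.intervalIntegrable 0 (t-2*ε)) (hc2'.intervalIntegrable (t-2*ε) t)]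
    have e1 : ∫ s in (0:ℝ)..(t-2*ε), gam g' |t-2*ε-s| = Gam g' (t-2*ε) := by
      rw [integral_congr (g := fun s => gam g' (t-2*ε-s)) (fun s hs => ?_)]
      · rw [intervalIntegral.integral_comp_sub_left (gam g') (t-2*ε)]
        norm_num [Gam]
      · rw [uIcc_of_le (by linarith : (0:ℝ) ≤ t-2*ε)] at hs
        rw [abs_of_nonneg (by linarith [hs.2])]
    have e2 : ∫ s in (t-2*ε)..t, gam g' |t-2*ε-s| = Gam g' (2*ε) := by
      rw [integral_congr (g := fun s => gam g' (s-(t-2*ε))) (fun s hs => ?_)]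
      · rw [intervalIntegral.integral_comp_sub_right (gam g') (t-2*ε)]
        norm_num [Gam]
      · rw [uIcc_of_le (by linarith : t-2*ε ≤ t)] at hs
        rw [abs_of_nonpos (by linarith [hs.1]), neg_sub]
    rw [e1, e2]
  have hJ3 : ∫ s in (0:ℝ)..t, gam g' (t-s) = Gam g' t := by
    rw [intervalIntegral.integral_comp_sub_left (gam g') t]
    norm_num [Gam]
  have hJ4 : ∫ s in (0:ℝ)..t, gam g' (max (t-ε) 0 - max (s-ε) 0)
      = ε * gam g' (t-ε) + Gam g' (t-ε) := by
    simp only [hat]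
    have hc4' : Continuous fun s : ℝ => gam g' (t-ε - max (s-ε) 0) :=
      hgc.comp (continuous_const.sub ((continuous_id.sub continuous_const).max continuous_const))
    rw [← integral_add_adjacent_intervals (a := (0:ℝ)) (b := ε) (c := t)
      (hc4'.intervalIntegrable 0 ε) (hc4'.intervalIntegrable ε t)]
    have e1 : ∫ s in (0:ℝ)..ε, gam g' (t-ε-max (s-ε) 0) = ε * gam g' (t-ε) := by
      rw [integral_congr (g := fun _ => gam g' (t-ε)) (fun s hs => ?_), intervalIntegral.integral_const]
      · simp
      · rw [uIcc_of_le hε.le] at hs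
        have : max (s-ε) 0 = 0 := max_eq_right (by linarith [hs.2])
        rw [this, sub_zero]
    have e2 : ∫ s in ε..t, gam g' (t-ε-max (s-ε) 0) = Gam g' (t-ε) := by
      rw [integral_congr (g := fun s => gam g' (t-s)) (fun s hs => ?_)]
      · rw [intervalIntegral.integral_comp_sub_left (gam g') t]
        norm_num [Gam]
      · rw [uIcc_of_le hεt] at hs
        have : max (s-ε) 0 = s-ε := max_eq_left (by linarith [hs.1])
        rw [this]; ring_nf
    rw [e1, e2]
  calc ∫ s in (0:ℝ)..t, (gam g' (t+ε-max (s-ε) 0) + gam g' |max (t-ε) 0 - (s+ε)|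
        - gam g' (t-s) - gam g' (max (t-ε) 0 - max (s-ε) 0))
      = ((∫ s in (0:ℝ)..t, gam g' (t+ε-max (s-ε) 0))
          + ∫ s in (0:ℝ)..t, gam g' |max (t-ε) 0 - (s+ε)|)
        - (∫ s in (0:ℝ)..t, gam g' (t-s))
        - ∫ s in (0:ℝ)..t, gam g' (max (t-ε) 0 - max (s-ε) 0) := by
        rw [integral_sub (((hc1.intervalIntegrable 0 t).add (hc2.intervalIntegrable 0 t)).sub
              (hc3.intervalIntegrable 0 t))
            (hc4.intervalIntegrable 0 t),
          integral_sub ((hc1.intervalIntegrable 0 t).add (hc2.intervalIntegrable 0 t)) (hc3.intervalIntegrable 0 t),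
          integral_add (hc1.intervalIntegrable 0 t) (hc2.intervalIntegrable 0 t)]
    _ = _ := by rw [hJ1, hJ2, hJ3, hJ4]; ring



lemma intInt' {f : ℝ → ℝ} {B : ℝ} (hm : Measurable f) (hb : ∀ u, |f u| ≤ B) (a b : ℝ) :
    IntervalIntegrable f volume a b := by
  rw [intervalIntegrable_iff]
  refine Measure.integrableOn_of_bounded (M := B) (by simp [Set.uIoc]) hm.aestronglyMeasurable ?_
  exact Eventually.of_forall fun u => by simpa [Real.norm_eq_abs] using hb u

lemma swap_lemma {h : ℝ → ℝ → ℝ} {a b c d B : ℝ} (hab : a ≤ b) (hcd : c ≤ d)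
    (hm : StronglyMeasurable (Function.uncurry h)) (hB : ∀ t r, |h t r| ≤ B) :
    ∫ t in a..b, (∫ r in c..d, h t r) = ∫ r in c..d, (∫ t in a..b, h t r) := by
  have hint : Integrable (Function.uncurry h)
      ((volume.restrict (Ioc a b)).prod (volume.restrict (Ioc c d))) := by
    refine (integrable_const B).mono' hm.aestronglyMeasurable ?_
    exact Eventually.of_forall fun p => by simpa [Real.norm_eq_abs, Function.uncurry] using hB p.1 p.2
  rw [integral_of_le hab, integral_of_le hcd]
  simp_rw [integral_of_le hcd, integral_of_le hab]
  exact MeasureTheory.integral_integral_swap hint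

lemma psi_meas {f g : ℝ → ℝ} (hf : Measurable f) (hg : Measurable g) (a b : ℝ) :
    Measurable fun r => ∫ t in a..b, f t * g (t + r) := by
  have h1 : ∀ c d : ℝ, Measurable fun r => ∫ t in Ioc c d, f t * g (t + r) := by
    intro c d
    have hsm : StronglyMeasurable (Function.uncurry fun (r t : ℝ) => f t * g (t + r)) :=
      ((hf.comp measurable_snd).mul (hg.comp (measurable_snd.add measurable_fst))).stronglyMeasurable
    exact (hsm.integral_prod_right' (ν := volume.restrict (Ioc c d))).measurable
  simp_rw [intervalIntegral]
  exact (h1 a b).sub (h1 b a)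

lemma cont_shift_integral {ψ : ℝ → ℝ} {B : ℝ} (hm : Measurable ψ) (hb : ∀ r, |ψ r| ≤ B)
    (c d : ℝ) : Continuous fun u => ∫ w in c..d, ψ (u + w) := by
  have hii := intInt' hm hb
  have heq : (fun u => ∫ w in c..d, ψ (u + w))
      = fun u => (∫ x in (0:ℝ)..(u + d), ψ x) - ∫ x in (0:ℝ)..(u + c), ψ x := by
    funext u
    rw [intervalIntegral.integral_comp_add_left ψ u,
      ← integral_interval_sub_left (hii 0 (u + d)) (hii 0 (u + c))]
  rw [heq]
  have hP := intervalIntegral.continuous_primitive hii 0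
  exact (hP.comp (continuous_id.add continuous_const)).sub
    (hP.comp (continuous_id.add continuous_const))


end TraceAux


set_option maxHeartbeats 4000000 in
open TraceAux in
/-- Weak-star convergence of the trace measures: for a centered, square-integrable
process `G` with `G₀ = 0`, covariance-stationary increments and variance function
`γ(t) = ∫₀^t g` with `0 ≤ g ≤ C`, the trace densities
`𝒱̇_ε(t) = (1/(4ε²)) ∫₀^t E[(G_{t+ε} - G_{(t-ε)₊})(G_{s+ε} - G_{(s-ε)₊})] ds`
satisfy `∫₀^T φ 𝒱̇_ε → (1/2) ∫₀^T φ g` as `ε → 0⁺`, for every `T > 0` and every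
continuous `φ : [0,T] → ℝ`. -/
theorem trace_measures_weakStar_convergence
    {Ω : Type*} [MeasurableSpace Ω] (μ : Measure Ω) [IsProbabilityMeasure μ]
    (G : ℝ → Ω → ℝ)
    (hL2 : ∀ t : ℝ, 0 ≤ t → MemLp (G t) 2 μ)
    (hcent : ∀ t : ℝ, 0 ≤ t → ∫ ω, G t ω ∂μ = 0)
    (hzero : ∀ᵐ ω ∂μ, G 0 ω = 0)
    (hstat : ∀ u v h : ℝ, 0 ≤ u → 0 ≤ v → 0 ≤ h →
      ∫ ω, (G (u + h) ω - G h ω) * (G (v + h) ω - G h ω) ∂μ = ∫ ω, G u ω * G v ω ∂μ)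
    (g : ℝ → ℝ) (C : ℝ) (hgmeas : Measurable g)
    (hg : ∀ᵐ u ∂(volume.restrict (Set.Ici (0:ℝ))), 0 ≤ g u ∧ g u ≤ C)
    (hγ : ∀ t : ℝ, 0 ≤ t → ∫ ω, (G t ω) ^ 2 ∂μ = ∫ u in (0:ℝ)..t, g u)
    (T : ℝ) (hT : 0 < T) (φ : ℝ → ℝ) (hφ : ContinuousOn φ (Set.Icc 0 T)) :
    Tendsto
      (fun ε : ℝ => ∫ t in (0:ℝ)..T, φ t *
        ((1 / (4 * ε ^ 2)) * ∫ s in (0:ℝ)..t,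
          ∫ ω, (G (t + ε) ω - G (max (t - ε) 0) ω) * (G (s + ε) ω - G (max (s - ε) 0) ω) ∂μ))
      (nhdsWithin 0 (Set.Ioi 0))
      (nhds ((1 / 2) * ∫ t in (0:ℝ)..T, φ t * g t)) := by
  classical
  -- truncate g
  set g' : ℝ → ℝ := fun u => max 0 (min (g u) C) with hg'def
  have hC0 : 0 ≤ C := by
    have hne : volume.restrict (Set.Ici (0:ℝ)) ≠ 0 := by
      simp [Measure.restrict_eq_zero]
    haveI : (ae (volume.restrict (Set.Ici (0:ℝ)))).NeBot := ae_neBot.mpr hne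
    obtain ⟨u, hu⟩ := hg.exists
    exact le_trans hu.1 hu.2
  have h0' : ∀ u, 0 ≤ g' u := fun u => le_max_left _ _
  have hC' : ∀ u, g' u ≤ C := fun u => max_le hC0 (min_le_right _ _)
  have hm' : Measurable g' := measurable_const.max (hgmeas.min measurable_const)
  have hgg' : ∀ᵐ u ∂(volume.restrict (Set.Ici (0:ℝ))), g u = g' u := by
    filter_upwards [hg] with u hu
    simp [hg'def, min_eq_left hu.2, max_eq_right hu.1]
  -- a.e. equality on subintervals of [0, ∞)
  have hcongr_sub : ∀ {s : Set ℝ}, MeasurableSet s → s ⊆ Set.Ici (0:ℝ) →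
      ∀ᵐ u ∂volume, u ∈ s → g u = g' u := by
    intro s hsm hss
    exact (ae_restrict_iff' hsm).mp (ae_restrict_of_ae_restrict_of_subset hss hgg')
  set γ : ℝ → ℝ := TraceAux.gam g' with hγdef
  have hγ' : ∀ t : ℝ, 0 ≤ t → ∫ ω, (G t ω) ^ 2 ∂μ = γ t := by
    intro t ht
    rw [hγ t ht, hγdef, TraceAux.gam]
    refine intervalIntegral.integral_congr_ae ?_
    have := hcongr_sub (measurableSet_Ioc (a := (0:ℝ)) (b := t)) (Set.Ioc_subset_Icc_self.trans Set.Icc_subset_Ici_self)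
    rw [uIoc_of_le ht]
    exact this
  have hγc : Continuous γ := TraceAux.gam_cont hm' h0' hC'
  have hγlip : ∀ x y : ℝ, |γ y - γ x| ≤ C * |y - x| := TraceAux.gam_lip hm' h0' hC'
  -- Part A: covariance structure
  have hmul : ∀ u v : ℝ, 0 ≤ u → 0 ≤ v → Integrable (fun ω => G u ω * G v ω) μ := by
    intro u v hu hv
    have h2u := (hL2 u hu).integrable_sq
    have h2v := (hL2 v hv).integrable_sq
    refine ((h2u.add h2v).div_const 2).mono' ((hL2 u hu).1.mul (hL2 v hv).1) ?_
    refine Eventually.of_forall fun ω => ?_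
    simp only [Real.norm_eq_abs, Pi.add_apply, Pi.div_apply]
    rw [abs_mul]
    nlinarith [sq_nonneg (|G u ω| - |G v ω|), sq_abs (G u ω), sq_abs (G v ω),
      abs_nonneg (G u ω), abs_nonneg (G v ω)]
  have hvar : ∀ u v : ℝ, 0 ≤ v → v ≤ u → ∫ ω, (G u ω - G v ω)^2 ∂μ = γ (u - v) := by
    intro u v hv hvu
    have h := hstat (u - v) (u - v) v (by linarith) (by linarith) hv
    rw [sub_add_cancel] at h
    calc ∫ ω, (G u ω - G v ω)^2 ∂μ
        = ∫ ω, (G u ω - G v ω) * (G u ω - G v ω) ∂μ := by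
          simp_rw [pow_two]
      _ = ∫ ω, G (u - v) ω * G (u - v) ω ∂μ := h
      _ = ∫ ω, (G (u - v) ω)^2 ∂μ := by simp_rw [pow_two]
      _ = γ (u - v) := hγ' (u - v) (by linarith)
  have hR : ∀ u v : ℝ, 0 ≤ v → v ≤ u →
      ∫ ω, G u ω * G v ω ∂μ = (γ u + γ v - γ (u - v)) / 2 := by
    intro u v hv hvu
    have hu : 0 ≤ u := le_trans hv hvu
    have hexp : (fun ω => (G u ω - G v ω)^2)
        = fun ω => (G u ω * G u ω - 2 * (G u ω * G v ω)) + G v ω * G v ω :=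
      funext fun ω => by ring
    have hvv := hvar u v hv hvu
    rw [hexp] at hvv
    have e1 : ∫ ω, ((G u ω * G u ω - 2 * (G u ω * G v ω)) + G v ω * G v ω) ∂μ
        = (∫ ω, (G u ω * G u ω - 2 * (G u ω * G v ω)) ∂μ) + ∫ ω, G v ω * G v ω ∂μ :=
      integral_add ((hmul u u hu hu).sub ((hmul u v hu hv).const_mul 2)) (hmul v v hv hv)
    have e2 : ∫ ω, (G u ω * G u ω - 2 * (G u ω * G v ω)) ∂μ
        = (∫ ω, G u ω * G u ω ∂μ) - ∫ ω, 2 * (G u ω * G v ω) ∂μ :=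
      integral_sub (hmul u u hu hu) ((hmul u v hu hv).const_mul 2)
    have e3 : ∫ ω, 2 * (G u ω * G v ω) ∂μ = 2 * ∫ ω, G u ω * G v ω ∂μ :=
      integral_const_mul _ _
    rw [e1, e2, e3] at hvv
    have huu : ∫ ω, G u ω * G u ω ∂μ = γ u := by
      rw [← hγ' u hu]; simp_rw [pow_two]
    have hvv2 : ∫ ω, G v ω * G v ω ∂μ = γ v := by
      rw [← hγ' v hv]; simp_rw [pow_two]
    rw [huu, hvv2] at hvv
    linarith
  have hRsym : ∀ u v : ℝ, 0 ≤ u → 0 ≤ v →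
      ∫ ω, G u ω * G v ω ∂μ = (γ u + γ v - γ |u - v|) / 2 := by
    intro u v hu hv
    rcases le_total v u with h | h
    · rw [abs_of_nonneg (by linarith : (0:ℝ) ≤ u - v)]
      exact hR u v hv h
    · rw [abs_of_nonpos (by linarith : u - v ≤ (0:ℝ)), neg_sub]
      have hc : (fun ω => G u ω * G v ω) = fun ω => G v ω * G u ω :=
        funext fun ω => mul_comm _ _
      rw [hc, hR v u hu h]
      ring
  have hD : ∀ ε t s : ℝ, 0 < ε → 0 ≤ s → s ≤ t →
      ∫ ω, (G (t + ε) ω - G (max (t - ε) 0) ω) * (G (s + ε) ω - G (max (s - ε) 0) ω) ∂μ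
      = (γ (t + ε - max (s - ε) 0) + γ |max (t - ε) 0 - (s + ε)|
          - γ (t - s) - γ (max (t - ε) 0 - max (s - ε) 0)) / 2 := by
    intro ε t s hε hs hst
    have ht : 0 ≤ t := le_trans hs hst
    set a : ℝ := max (t - ε) 0 with hadef
    set b : ℝ := max (s - ε) 0 with hbdef
    have ha0 : 0 ≤ a := le_max_right _ _
    have hb0 : 0 ≤ b := le_max_right _ _
    have hbs : b ≤ s := max_le (by linarith) hs
    have hat : a ≤ t := max_le (by linarith) ht
    have hba : b ≤ a := max_le_max (by linarith) le_rfl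
    have htε : (0:ℝ) ≤ t + ε := by linarith
    have hsε : (0:ℝ) ≤ s + ε := by linarith
    have hexp : (fun ω => (G (t + ε) ω - G a ω) * (G (s + ε) ω - G b ω))
        = fun ω => ((G (t + ε) ω * G (s + ε) ω - G (t + ε) ω * G b ω)
            - (G a ω * G (s + ε) ω - G a ω * G b ω)) :=
      funext fun ω => by ring
    have habs1 : |t + ε - (s + ε)| = t - s := by
      rw [show t + ε - (s + ε) = t - s by ring]
      exact abs_of_nonneg (by linarith)
    have habs2 : |t + ε - b| = t + ε - b := abs_of_nonneg (by linarith)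
    have habs3 : |a - b| = a - b := abs_of_nonneg (by linarith)
    have e0 : ∫ ω, ((G (t+ε) ω * G (s+ε) ω - G (t+ε) ω * G b ω)
          - (G a ω * G (s+ε) ω - G a ω * G b ω)) ∂μ
        = (∫ ω, (G (t+ε) ω * G (s+ε) ω - G (t+ε) ω * G b ω) ∂μ)
          - ∫ ω, (G a ω * G (s+ε) ω - G a ω * G b ω) ∂μ :=
      integral_sub ((hmul _ _ htε hsε).sub (hmul _ _ htε hb0))
        ((hmul _ _ ha0 hsε).sub (hmul _ _ ha0 hb0))
    have e1 : ∫ ω, (G (t+ε) ω * G (s+ε) ω - G (t+ε) ω * G b ω) ∂μ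
        = (∫ ω, G (t+ε) ω * G (s+ε) ω ∂μ) - ∫ ω, G (t+ε) ω * G b ω ∂μ :=
      integral_sub (hmul _ _ htε hsε) (hmul _ _ htε hb0)
    have e2 : ∫ ω, (G a ω * G (s+ε) ω - G a ω * G b ω) ∂μ
        = (∫ ω, G a ω * G (s+ε) ω ∂μ) - ∫ ω, G a ω * G b ω ∂μ :=
      integral_sub (hmul _ _ ha0 hsε) (hmul _ _ ha0 hb0)
    rw [hexp, e0, e1, e2,
      hRsym _ _ htε hsε, hRsym _ _ htε hb0, hRsym _ _ ha0 hsε, hRsym _ _ ha0 hb0,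
      habs1, habs2, habs3]
    ring
  -- continuous bounded extension of φ
  set p : ℝ → ℝ := fun x => min (max x 0) T with hpdef
  have hpmem : ∀ x, p x ∈ Set.Icc (0:ℝ) T := fun x =>
    ⟨le_min (le_max_right _ _) hT.le, min_le_right _ _⟩
  set φb : ℝ → ℝ := fun x => φ (p x) with hφbdef
  have hφbc : Continuous φb :=
    hφ.comp_continuous ((continuous_id.max continuous_const).min continuous_const) hpmem
  have hφbeq : ∀ x ∈ Set.Icc (0:ℝ) T, φb x = φ x := by
    intro x hx
    have : p x = x := by
      rw [hpdef]; dsimp only; rw [max_eq_left hx.1, min_eq_left hx.2]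
    rw [hφbdef]; dsimp only; rw [this]
  obtain ⟨z, hz, hzmax⟩ := isCompact_Icc.exists_isMaxOn
    (Set.nonempty_Icc.mpr hT.le) (f := fun t => |φ t|) hφ.abs
  set M : ℝ := |φ z| with hMdef
  have hM0 : 0 ≤ M := abs_nonneg _
  have hMb : ∀ x, |φb x| ≤ M := fun x => hzmax (hpmem x)
  -- uniform continuity of φb
  have hunif : ∀ δ : ℝ, 0 < δ → ∃ θ : ℝ, 0 < θ ∧
      ∀ x y : ℝ, |x - y| < θ → |φb x - φb y| < δ := by
    intro δ hδ
    have huc := isCompact_Icc.uniformContinuousOn_of_continuous hφ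
    rw [Metric.uniformContinuousOn_iff] at huc
    obtain ⟨θ, hθ0, hθ⟩ := huc δ hδ
    refine ⟨θ, hθ0, fun x y hxy => ?_⟩
    have hple : |p x - p y| ≤ |x - y| := by
      refine le_trans (abs_min_sub_min_le_max _ _ _ _) (max_le (abs_max_sub_max_le_abs _ _ _) ?_)
      simpa using abs_nonneg (x - y)
    have hd : dist (p x) (p y) < θ := by
      rw [Real.dist_eq]; exact lt_of_le_of_lt hple hxy
    have := hθ (p x) (hpmem x) (p y) (hpmem y) hd
    rwa [Real.dist_eq] at this
  -- the limit value, rewritten with g'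
  set L : ℝ := ∫ t in (0:ℝ)..T, φb t * g' t with hLdef
  have hLeq : ∫ t in (0:ℝ)..T, φ t * g t = L := by
    rw [hLdef]
    refine intervalIntegral.integral_congr_ae ?_
    have h1 := hcongr_sub (measurableSet_Ioc (a := (0:ℝ)) (b := T))
      (Set.Ioc_subset_Icc_self.trans Set.Icc_subset_Ici_self)
    filter_upwards [h1] with x hx hxm
    rw [uIoc_of_le hT.le] at hxm
    rw [hx hxm, hφbeq x (Set.Ioc_subset_Icc_self hxm)]
  rw [hLeq]
  rw [Metric.tendsto_nhdsWithin_nhds]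
  intro δ hδ
  set δ1 : ℝ := δ / (4 * (C * T + 1)) with hδ1def
  have hCT : 0 < C * T + 1 := by positivity
  have hδ1 : 0 < δ1 := by positivity
  obtain ⟨θ, hθ0, hθ⟩ := hunif δ1 hδ1
  set η : ℝ := min (T / 2) (min (θ / 2) (δ / (8 * (M * C + 1)))) with hηdef
  have hMC : 0 < M * C + 1 := by positivity
  have hη0 : 0 < η := by
    refine lt_min (by positivity) (lt_min (by positivity) (by positivity))
  refine ⟨η, hη0, ?_⟩
  intro ε hεmem hεd
  have hε : 0 < ε := hεmem
  have hεη : ε < η := by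
    rw [Real.dist_eq, sub_zero, abs_of_pos hε] at hεd; exact hεd
  have hεT : 2 * ε ≤ T := by
    have := lt_of_lt_of_le hεη (min_le_left _ _); linarith
  have hεθ : 2 * ε < θ := by
    have := lt_of_lt_of_le hεη (le_trans (min_le_right _ _) (min_le_left _ _)); linarith
  have hεδ : ε < δ / (8 * (M * C + 1)) :=
    lt_of_lt_of_le hεη (le_trans (min_le_right _ _) (min_le_right _ _))
  have h2εT : 2 * ε ≤ T := hεT
  have hεne : ε ≠ 0 := ne_of_gt hε
  have hε2 : (0:ℝ) < 2 * ε := by linarith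
  -- notation for the analytic integrand
  set E : ℝ → ℝ → ℝ := fun t s => γ (t + ε - max (s - ε) 0) + γ |max (t - ε) 0 - (s + ε)|
      - γ (t - s) - γ (max (t - ε) 0 - max (s - ε) 0) with hEdef
  set IE : ℝ → ℝ := fun t => ∫ s in (0:ℝ)..t, E t s with hIEdef
  set Φ : ℝ → ℝ := fun t => φb t * ((1 / (4 * ε ^ 2)) * ((1 / 2) * IE t)) with hΦdef
  have hEcont : Continuous (Function.uncurry E) := by
    simp only [hEdef]
    apply Continuous.sub
    apply Continuous.sub
    apply Continuous.add
    · exact hγc.comp ((continuous_fst.add continuous_const).sub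
        ((continuous_snd.sub continuous_const).max continuous_const))
    · exact hγc.comp ((((continuous_fst.sub continuous_const).max continuous_const).sub
        (continuous_snd.add continuous_const)).abs)
    · exact hγc.comp (continuous_fst.sub continuous_snd)
    · exact hγc.comp (((continuous_fst.sub continuous_const).max continuous_const).sub
        ((continuous_snd.sub continuous_const).max continuous_const))
  have hIEc : Continuous IE := by
    simp only [hIEdef]
    exact continuous_parametric_intervalIntegral_of_continuous hEcont continuous_id
  have hΦc : Continuous Φ := by
    simp only [hΦdef]
    exact hφbc.mul (continuous_const.mul (continuous_const.mul hIEc))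
  -- rewrite the target integral
  have hgoal1 : (∫ t in (0:ℝ)..T, φ t *
        ((1 / (4 * ε ^ 2)) * ∫ s in (0:ℝ)..t,
          ∫ ω, (G (t + ε) ω - G (max (t - ε) 0) ω) * (G (s + ε) ω - G (max (s - ε) 0) ω) ∂μ))
      = ∫ t in (0:ℝ)..T, Φ t := by
    refine integral_congr fun t ht => ?_
    rw [uIcc_of_le hT.le] at ht
    have hin : (∫ s in (0:ℝ)..t,
          ∫ ω, (G (t + ε) ω - G (max (t - ε) 0) ω) * (G (s + ε) ω - G (max (s - ε) 0) ω) ∂μ)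
        = ∫ s in (0:ℝ)..t, (1/2) * E t s := by
      refine integral_congr fun x hx => ?_
      rw [uIcc_of_le ht.1] at hx
      rw [hD ε t x hε hx.1 hx.2]
      simp only [hEdef]
      ring
    rw [hin, intervalIntegral.integral_const_mul]
    simp only [hΦdef, hIEdef]
    rw [hφbeq t ht]
  rw [hgoal1]
  have hsplit : ∫ t in (0:ℝ)..T, Φ t
      = (∫ t in (0:ℝ)..(2*ε), Φ t) + ∫ t in (2*ε)..T, Φ t :=
    (integral_add_adjacent_intervals (hΦc.intervalIntegrable _ _)
      (hΦc.intervalIntegrable _ _)).symm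
  -- bound on the initial piece
  have hEbound : ∀ t s : ℝ, 0 ≤ s → s ≤ t → |E t s| ≤ 4 * (C * ε) := by
    intro t s hs hst
    have ht0 : 0 ≤ t := le_trans hs hst
    have hb1 : max (s - ε) 0 ≤ s := max_le (by linarith) hs
    have hb2 : s - ε ≤ max (s - ε) 0 := le_max_left _ _
    have ha1 : max (t - ε) 0 ≤ t := max_le (by linarith) ht0
    have ha2 : t - ε ≤ max (t - ε) 0 := le_max_left _ _
    have hba : max (s - ε) 0 ≤ max (t - ε) 0 := max_le_max (by linarith) le_rfl
    have h1 : |γ (t + ε - max (s - ε) 0) - γ (t - s)| ≤ C * (2 * ε) := by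
      refine le_trans (hγlip _ _) ?_
      have h4 : |t + ε - max (s - ε) 0 - (t - s)| ≤ 2 * ε :=
        abs_le.mpr ⟨by linarith, by linarith⟩
      exact mul_le_mul_of_nonneg_left h4 hC0
    have h2 : |γ |max (t - ε) 0 - (s + ε)| - γ (max (t - ε) 0 - max (s - ε) 0)| ≤ C * (2 * ε) := by
      refine le_trans (hγlip _ _) ?_
      have habs : abs (|max (t - ε) 0 - (s + ε)| - (max (t - ε) 0 - max (s - ε) 0))
          ≤ 2 * ε := by
        have h0 : |max (t - ε) 0 - max (s - ε) 0| = max (t - ε) 0 - max (s - ε) 0 :=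
          abs_of_nonneg (by linarith)
        have h3 : abs (|max (t - ε) 0 - (s + ε)| - |max (t - ε) 0 - max (s - ε) 0|)
            ≤ |(max (t - ε) 0 - (s + ε)) - (max (t - ε) 0 - max (s - ε) 0)| :=
          abs_abs_sub_abs_le_abs_sub _ _
        rw [h0] at h3
        refine le_trans h3 ?_
        have : (max (t - ε) 0 - (s + ε)) - (max (t - ε) 0 - max (s - ε) 0)
            = max (s - ε) 0 - (s + ε) := by ring
        rw [this]
        exact abs_le.mpr ⟨by linarith, by linarith⟩
      exact mul_le_mul_of_nonneg_left habs hC0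
    have hE2 : E t s = (γ (t + ε - max (s - ε) 0) - γ (t - s))
        + (γ |max (t - ε) 0 - (s + ε)| - γ (max (t - ε) 0 - max (s - ε) 0)) := by
      simp only [hEdef]; ring
    rw [hE2]
    calc |(γ (t + ε - max (s - ε) 0) - γ (t - s))
        + (γ |max (t - ε) 0 - (s + ε)| - γ (max (t - ε) 0 - max (s - ε) 0))|
        ≤ |γ (t + ε - max (s - ε) 0) - γ (t - s)|
          + |γ |max (t - ε) 0 - (s + ε)| - γ (max (t - ε) 0 - max (s - ε) 0)| := abs_add_le _ _
      _ ≤ C * (2 * ε) + C * (2 * ε) := add_le_add h1 h2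
      _ = 4 * (C * ε) := by ring
  have hB1 : |∫ t in (0:ℝ)..(2*ε), Φ t| ≤ M * C * (2 * ε) := by
    have hb : ∀ t ∈ Set.uIoc (0:ℝ) (2*ε), ‖Φ t‖ ≤ M * C := by
      intro t ht
      rw [uIoc_of_le hε2.le] at ht
      have hIEb : |IE t| ≤ 4 * (C * ε) * t := by
        simp only [hIEdef]
        have := intervalIntegral.norm_integral_le_of_norm_le_const
          (C := 4 * (C * ε)) (a := (0:ℝ)) (b := t) (f := fun s => E t s) ?_
        · rw [Real.norm_eq_abs] at this
          calc |∫ s in (0:ℝ)..t, E t s| ≤ 4 * (C * ε) * |t - 0| := this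
            _ = 4 * (C * ε) * t := by rw [sub_zero, abs_of_nonneg ht.1.le]
        · intro s hs
          rw [uIoc_of_le ht.1.le] at hs
          rw [Real.norm_eq_abs]
          exact hEbound t s hs.1.le hs.2
      rw [Real.norm_eq_abs]
      simp only [hΦdef]
      rw [abs_mul, abs_mul, abs_mul]
      have h14 : |1 / (4 * ε ^ 2)| = 1 / (4 * ε ^ 2) := abs_of_pos (by positivity)
      have h12 : |(1:ℝ)/2| = 1/2 := by norm_num
      rw [h14, h12]
      have hφbt := hMb t
      have hIEt := hIEb
      have hC2 : 1 / (4 * ε ^ 2) * (1 / 2 * |IE t|) ≤ C := by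
        have h1 : 1 / (4 * ε ^ 2) * (1 / 2 * |IE t|) ≤ 1 / (4 * ε ^ 2) * (1 / 2 * (4 * (C * ε) * t)) :=
          mul_le_mul_of_nonneg_left
            (mul_le_mul_of_nonneg_left hIEt (by norm_num)) (by positivity)
        have h2 : 1 / (4 * ε ^ 2) * (1 / 2 * (4 * (C * ε) * t)) = C * t / (2 * ε) := by
          field_simp
        have h3 : C * t / (2 * ε) ≤ C := by
          rw [div_le_iff₀ hε2]
          exact mul_le_mul_of_nonneg_left ht.2 hC0
        linarith
      have := mul_le_mul hφbt hC2 (mul_nonneg (by positivity) (mul_nonneg (by norm_num) (abs_nonneg _))) hM0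
      linarith
    have := intervalIntegral.norm_integral_le_of_norm_le_const hb
    rw [Real.norm_eq_abs] at this
    calc |∫ t in (0:ℝ)..(2*ε), Φ t| ≤ M * C * |2*ε - 0| := this
      _ = M * C * (2 * ε) := by rw [sub_zero, abs_of_pos hε2]
  -- closed form on [2ε, T]
  set Γ2 : ℝ → ℝ := TraceAux.Gam g' with hΓdef
  have hΓc : Continuous Γ2 := TraceAux.Gam_cont hm' h0' hC'
  have hΓsub : ∀ x y : ℝ, Γ2 y - Γ2 x = ∫ u in x..y, γ u := TraceAux.Gam_sub hm' h0' hC'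
  have hγsub : ∀ x y : ℝ, γ y - γ x = ∫ u in x..y, g' u := TraceAux.gam_sub hm' h0' hC'
  have hkey : ∀ t : ℝ, 2*ε ≤ t → IE t = ε*(γ (t+ε) - γ (t-ε))
      + ((Γ2 (t+ε) - Γ2 t) - (Γ2 (t-ε) - Γ2 (t-2*ε))) := by
    intro t ht
    have h := TraceAux.key_identity hm' h0' hC' hε ht
    simp only [hIEdef, hEdef, hγdef, hΓdef]
    exact h
  set K1 : ℝ → ℝ := fun t => φb t * (γ (t+ε) - γ (t-ε)) with hK1def
  set K2 : ℝ → ℝ := fun t => φb t * ((Γ2 (t+ε) - Γ2 t) - (Γ2 (t-ε) - Γ2 (t-2*ε))) with hK2def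
  have hK1c : Continuous K1 := by
    simp only [hK1def]
    exact hφbc.mul ((hγc.comp (continuous_id.add continuous_const)).sub
      (hγc.comp (continuous_id.sub continuous_const)))
  have hK2c : Continuous K2 := by
    simp only [hK2def]
    exact hφbc.mul (((hΓc.comp (continuous_id.add continuous_const)).sub hΓc).sub
      ((hΓc.comp (continuous_id.sub continuous_const)).sub
        (hΓc.comp (continuous_id.sub continuous_const))))
  have hsecond : ∫ t in (2*ε)..T, Φ t
      = (1/(8*ε^2)) * ((ε * ∫ t in (2*ε)..T, K1 t) + ∫ t in (2*ε)..T, K2 t) := by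
    have hcg : ∀ t ∈ Set.uIcc (2*ε) T, Φ t = (1/(8*ε^2)) * (ε * K1 t + K2 t) := by
      intro t ht
      rw [uIcc_of_le h2εT] at ht
      simp only [hΦdef, hK1def, hK2def]
      rw [hkey t ht.1]
      field_simp
      ring
    rw [integral_congr hcg, intervalIntegral.integral_const_mul,
      integral_add ((hK1c.intervalIntegrable _ _).const_mul ε)
        (hK2c.intervalIntegrable _ _),
      intervalIntegral.integral_const_mul]
  -- Fubini
  set ψ : ℝ → ℝ := fun r => ∫ t in (2*ε)..T, φb t * g' (t + r) with hψdef
  have hgb : ∀ v : ℝ, |g' v| ≤ C := TraceAux.habs h0' hC'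
  have hMC0 : 0 ≤ M * C := mul_nonneg hM0 hC0
  have hfb : ∀ t r : ℝ, |φb t * g' (t + r)| ≤ M * C := fun t r => by
    rw [abs_mul]; exact mul_le_mul (hMb t) (hgb _) (abs_nonneg _) hM0
  have hF1 : ∫ t in (2*ε)..T, K1 t = ∫ r in (-ε)..ε, ψ r := by
    have step1 : ∀ t : ℝ, K1 t = ∫ r in (-ε)..ε, φb t * g' (t + r) := by
      intro t
      rw [intervalIntegral.integral_const_mul]
      simp only [hK1def]
      congr 1
      rw [intervalIntegral.integral_comp_add_left g' t, show t + -ε = t - ε by ring,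
        ← hγsub (t-ε) (t+ε)]
    calc ∫ t in (2*ε)..T, K1 t
        = ∫ t in (2*ε)..T, ∫ r in (-ε)..ε, φb t * g' (t + r) :=
          integral_congr fun t _ => step1 t
      _ = ∫ r in (-ε)..ε, ∫ t in (2*ε)..T, φb t * g' (t + r) :=
          TraceAux.swap_lemma h2εT (by linarith)
            ((hφbc.measurable.comp measurable_fst).mul
              (hm'.comp (measurable_fst.add measurable_snd))).stronglyMeasurable hfb
      _ = ∫ r in (-ε)..ε, ψ r := by simp only [hψdef]
  have hF2 : ∫ t in (2*ε)..T, K2 t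
      = ∫ u in (0:ℝ)..ε, ∫ w in (-(2*ε))..0, ψ (u + w) := by
    have hGam1 : ∀ t : ℝ, ∫ u in (0:ℝ)..ε, γ (t + u) = Γ2 (t+ε) - Γ2 t := by
      intro t
      rw [intervalIntegral.integral_comp_add_left γ t, show t + 0 = t by ring,
        ← hΓsub t (t+ε)]
    have hGam2 : ∀ t : ℝ, ∫ u in (0:ℝ)..ε, γ (t + u - 2*ε) = Γ2 (t-ε) - Γ2 (t-2*ε) := by
      intro t
      have hrw : ∀ u : ℝ, γ (t + u - 2*ε) = γ (t - 2*ε + u) := fun u => by ring_nf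
      simp only [hrw]
      rw [intervalIntegral.integral_comp_add_left γ (t - 2*ε),
        show t - 2*ε + 0 = t - 2*ε by ring, show t - 2*ε + ε = t - ε by ring,
        ← hΓsub (t-2*ε) (t-ε)]
    have step1 : ∀ t : ℝ, K2 t = ∫ u in (0:ℝ)..ε, φb t * (γ (t+u) - γ (t+u-2*ε)) := by
      intro t
      rw [intervalIntegral.integral_const_mul]
      simp only [hK2def]
      congr 1
      have i1 : IntervalIntegrable (fun u : ℝ => γ (t + u)) volume 0 ε :=
        (hγc.comp (continuous_const.add continuous_id)).intervalIntegrable _ _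
      have i2 : IntervalIntegrable (fun u : ℝ => γ (t + u - 2*ε)) volume 0 ε :=
        (hγc.comp ((continuous_const.add continuous_id).sub
          continuous_const)).intervalIntegrable _ _
      rw [integral_sub i1 i2, hGam1 t, hGam2 t]
    have hb2 : ∀ t u : ℝ, |φb t * (γ (t+u) - γ (t+u-2*ε))| ≤ M * (C * (2*ε)) := by
      intro t u
      rw [abs_mul]
      refine mul_le_mul (hMb t) ?_ (abs_nonneg _) hM0
      refine le_trans (hγlip (t+u-2*ε) (t+u)) ?_
      rw [show t+u - (t+u-2*ε) = 2*ε by ring, abs_of_pos hε2]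
    have hsm2 : StronglyMeasurable
        (Function.uncurry fun t u : ℝ => φb t * (γ (t+u) - γ (t+u-2*ε))) := by
      apply Continuous.stronglyMeasurable
      exact (hφbc.comp continuous_fst).mul
        ((hγc.comp (continuous_fst.add continuous_snd)).sub
          (hγc.comp ((continuous_fst.add continuous_snd).sub continuous_const)))
    calc ∫ t in (2*ε)..T, K2 t
        = ∫ t in (2*ε)..T, ∫ u in (0:ℝ)..ε, φb t * (γ (t+u) - γ (t+u-2*ε)) :=
          integral_congr fun t _ => step1 t
      _ = ∫ u in (0:ℝ)..ε, ∫ t in (2*ε)..T, φb t * (γ (t+u) - γ (t+u-2*ε)) :=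
          TraceAux.swap_lemma h2εT hε.le hsm2 hb2
      _ = ∫ u in (0:ℝ)..ε, ∫ w in (-(2*ε))..0, ψ (u + w) := by
          refine integral_congr fun u _ => ?_
          have step3 : ∀ t : ℝ, φb t * (γ (t+u) - γ (t+u-2*ε))
              = ∫ w in (-(2*ε))..0, φb t * g' (t + u + w) := by
            intro t
            rw [intervalIntegral.integral_const_mul]
            congr 1
            rw [intervalIntegral.integral_comp_add_left g' (t+u),
              show t + u + -(2*ε) = t+u-2*ε by ring, show t + u + 0 = t + u by ring,
              ← hγsub (t+u-2*ε) (t+u)]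
          have hb3 : ∀ t w : ℝ, |φb t * g' (t+u+w)| ≤ M * C := fun t w => by
            rw [abs_mul]; exact mul_le_mul (hMb t) (hgb _) (abs_nonneg _) hM0
          have hsm3 : StronglyMeasurable
              (Function.uncurry fun t w : ℝ => φb t * g' (t+u+w)) :=
            ((hφbc.measurable.comp measurable_fst).mul
              (hm'.comp ((measurable_fst.add_const u).add measurable_snd))).stronglyMeasurable
          calc ∫ t in (2*ε)..T, φb t * (γ (t+u) - γ (t+u-2*ε))
              = ∫ t in (2*ε)..T, ∫ w in (-(2*ε))..0, φb t * g' (t + u + w) :=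
                integral_congr fun t _ => step3 t
            _ = ∫ w in (-(2*ε))..0, ∫ t in (2*ε)..T, φb t * g' (t + u + w) :=
                TraceAux.swap_lemma h2εT (by linarith) hsm3 hb3
            _ = ∫ w in (-(2*ε))..0, ψ (u + w) := by
                simp only [hψdef, add_assoc]
  -- properties of ψ
  have hψm : Measurable ψ := by
    simp only [hψdef]
    exact TraceAux.psi_meas hφbc.measurable hm' _ _
  have hψb : ∀ r : ℝ, |ψ r| ≤ M * C * T := by
    intro r
    simp only [hψdef]
    have h := intervalIntegral.norm_integral_le_of_norm_le_const (C := M*C) (a := 2*ε) (b := T)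
      (f := fun t => φb t * g' (t + r)) (fun t _ => by rw [Real.norm_eq_abs]; exact hfb t r)
    rw [Real.norm_eq_abs] at h
    refine le_trans h ?_
    rw [abs_of_nonneg (by linarith : (0:ℝ) ≤ T - 2*ε)]
    have h2 := mul_le_mul_of_nonneg_left (by linarith : T - 2*ε ≤ T) hMC0
    linarith [h2]
  set δψ : ℝ := 6*(M*C)*ε + C*T*δ1 with hδψdef
  have hδψ0 : 0 ≤ δψ := by
    have h1 : 0 ≤ 6*(M*C)*ε := by positivity
    have h2 : 0 ≤ C*T*δ1 := by positivity
    simp only [hδψdef]; linarith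
  have hgi : ∀ a b : ℝ, IntervalIntegrable (fun v : ℝ => φb v * g' v) volume a b :=
    TraceAux.intInt' (hφbc.measurable.mul hm') (fun v => by
      rw [abs_mul]; exact mul_le_mul (hMb _) (hgb _) (abs_nonneg _) hM0)
  have hψest : ∀ r : ℝ, |r| ≤ 2*ε → |ψ r - L| ≤ δψ := by
    intro r hr
    have hrl := abs_le.mp hr
    have hfm : Measurable (fun v : ℝ => φb (v - r) * g' v) :=
      (hφbc.measurable.comp (measurable_id.sub_const r)).mul hm'
    have hfbb : ∀ v : ℝ, |φb (v - r) * g' v| ≤ M * C := fun v => by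
      rw [abs_mul]; exact mul_le_mul (hMb _) (hgb _) (abs_nonneg _) hM0
    have hfi : ∀ a b : ℝ, IntervalIntegrable (fun v : ℝ => φb (v - r) * g' v) volume a b :=
      TraceAux.intInt' hfm hfbb
    have hs1 : ψ r = ∫ v in (2*ε+r)..(T+r), φb (v - r) * g' v := by
      simp only [hψdef]
      have h := intervalIntegral.integral_comp_add_right (a := 2*ε) (b := T)
        (fun v => φb (v - r) * g' v) r
      rw [← h]
      refine integral_congr fun t _ => ?_
      rw [add_sub_cancel_right]
    have e1 : (∫ v in (2*ε+r)..(2*ε), φb (v - r) * g' v)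
        + (∫ v in (2*ε)..T, φb (v - r) * g' v)
        = ∫ v in (2*ε+r)..T, φb (v - r) * g' v :=
      integral_add_adjacent_intervals (hfi _ _) (hfi _ _)
    have e2 : (∫ v in (2*ε+r)..T, φb (v - r) * g' v)
        + (∫ v in T..(T+r), φb (v - r) * g' v)
        = ∫ v in (2*ε+r)..(T+r), φb (v - r) * g' v :=
      integral_add_adjacent_intervals (hfi _ _) (hfi _ _)
    have hstrip1 : |∫ v in (2*ε+r)..(2*ε), φb (v - r) * g' v| ≤ M*C*(2*ε) := by
      have h := intervalIntegral.norm_integral_le_of_norm_le_const (C := M*C)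
        (a := 2*ε+r) (b := 2*ε) (f := fun v => φb (v - r) * g' v)
        (fun v _ => by rw [Real.norm_eq_abs]; exact hfbb v)
      rw [Real.norm_eq_abs] at h
      refine le_trans h ?_
      rw [show 2*ε - (2*ε+r) = -r by ring, abs_neg]
      exact mul_le_mul_of_nonneg_left hr hMC0
    have hstrip2 : |∫ v in T..(T+r), φb (v - r) * g' v| ≤ M*C*(2*ε) := by
      have h := intervalIntegral.norm_integral_le_of_norm_le_const (C := M*C)
        (a := T) (b := T+r) (f := fun v => φb (v - r) * g' v)
        (fun v _ => by rw [Real.norm_eq_abs]; exact hfbb v)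
      rw [Real.norm_eq_abs] at h
      refine le_trans h ?_
      rw [show T + r - T = r by ring]
      exact mul_le_mul_of_nonneg_left hr hMC0
    have hmid : |(∫ v in (2*ε)..T, φb (v - r) * g' v) - ∫ v in (2*ε)..T, φb v * g' v|
        ≤ C*T*δ1 := by
      rw [← integral_sub (hfi _ _) (hgi _ _)]
      have h := intervalIntegral.norm_integral_le_of_norm_le_const (C := δ1*C)
        (a := 2*ε) (b := T) (f := fun v => φb (v - r) * g' v - φb v * g' v) ?_
      · rw [Real.norm_eq_abs] at h
        refine le_trans h ?_
        rw [abs_of_nonneg (by linarith : (0:ℝ) ≤ T - 2*ε)]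
        have h2 := mul_le_mul_of_nonneg_left (by linarith : T - 2*ε ≤ T)
          (mul_nonneg hδ1.le hC0)
        linarith [h2]
      · intro v _
        rw [Real.norm_eq_abs, show φb (v - r) * g' v - φb v * g' v
          = (φb (v - r) - φb v) * g' v by ring, abs_mul]
        have hφd : |φb (v - r) - φb v| ≤ δ1 := by
          refine le_of_lt (hθ _ _ ?_)
          rw [show v - r - v = -r by ring, abs_neg]
          exact lt_of_le_of_lt hr hεθ
        exact mul_le_mul hφd (hgb _) (abs_nonneg _) hδ1.le
    have hlast : |∫ v in (0:ℝ)..(2*ε), φb v * g' v| ≤ M*C*(2*ε) := by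
      have h := intervalIntegral.norm_integral_le_of_norm_le_const (C := M*C)
        (a := (0:ℝ)) (b := 2*ε) (f := fun v => φb v * g' v)
        (fun v _ => by
          rw [Real.norm_eq_abs, abs_mul]
          exact mul_le_mul (hMb _) (hgb _) (abs_nonneg _) hM0)
      rw [Real.norm_eq_abs] at h
      refine le_trans h ?_
      rw [sub_zero, abs_of_pos hε2]
    have hLsplit : L = (∫ v in (0:ℝ)..(2*ε), φb v * g' v)
        + ∫ v in (2*ε)..T, φb v * g' v := by
      rw [hLdef]
      exact (integral_add_adjacent_intervals (hgi _ _) (hgi _ _)).symm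
    have heq : ψ r - L = (∫ v in (2*ε+r)..(2*ε), φb (v - r) * g' v)
        + (∫ v in T..(T+r), φb (v - r) * g' v)
        + ((∫ v in (2*ε)..T, φb (v - r) * g' v) - ∫ v in (2*ε)..T, φb v * g' v)
        - ∫ v in (0:ℝ)..(2*ε), φb v * g' v := by
      rw [hs1, ← e2, ← e1, hLsplit]; ring
    rw [heq]
    have htri : ∀ a b c d : ℝ, |a + b + c - d| ≤ |a| + |b| + |c| + |d| := by
      intro a b c d
      have h1 : |a + b + c - d| ≤ |a + b + c| + |d| := by
        rw [sub_eq_add_neg]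
        refine le_trans (abs_add_le _ _) ?_
        rw [abs_neg]
      have h2 : |a + b + c| ≤ |a + b| + |c| := abs_add_le _ _
      have h3 : |a + b| ≤ |a| + |b| := abs_add_le _ _
      linarith
    refine le_trans (htri _ _ _ _) ?_
    simp only [hδψdef]
    linarith [hstrip1, hstrip2, hmid, hlast]
  -- integral estimates
  have hψii : ∀ a b : ℝ, IntervalIntegrable ψ volume a b := TraceAux.intInt' hψm hψb
  have hE2 : |(∫ r in (-ε)..ε, ψ r) - 2*ε*L| ≤ 2*ε*δψ := by
    have hsub : ∫ r in (-ε)..ε, (ψ r - L) = (∫ r in (-ε)..ε, ψ r) - 2*ε*L := by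
      rw [integral_sub (hψii _ _) intervalIntegrable_const, intervalIntegral.integral_const,
        smul_eq_mul, show ε - -ε = 2*ε by ring]
    have hb := intervalIntegral.norm_integral_le_of_norm_le_const (C := δψ) (a := -ε) (b := ε)
      (f := fun r => ψ r - L) ?_
    · rw [Real.norm_eq_abs, hsub, show ε - -ε = 2*ε by ring, abs_of_pos hε2] at hb
      linarith [hb]
    · intro r hrr
      rw [uIoc_of_le (by linarith : -ε ≤ ε)] at hrr
      rw [Real.norm_eq_abs]
      exact hψest r (abs_le.mpr ⟨by linarith [hrr.1], by linarith [hrr.2]⟩)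
  have hΘc : Continuous fun u => ∫ w in (-(2*ε))..0, ψ (u + w) :=
    TraceAux.cont_shift_integral hψm hψb _ _
  have hE3i : ∀ u : ℝ, 0 ≤ u → u ≤ ε →
      |(∫ w in (-(2*ε))..0, ψ (u + w)) - 2*ε*L| ≤ 2*ε*δψ := by
    intro u hu0 huε
    have hii : ∀ a b : ℝ, IntervalIntegrable (fun w => ψ (u + w)) volume a b :=
      TraceAux.intInt' (hψm.comp (measurable_const_add u)) (fun w => hψb _)
    have hsub : ∫ w in (-(2*ε))..0, (ψ (u + w) - L)
        = (∫ w in (-(2*ε))..0, ψ (u + w)) - 2*ε*L := by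
      rw [integral_sub (hii _ _) intervalIntegrable_const, intervalIntegral.integral_const,
        smul_eq_mul, show (0:ℝ) - -(2*ε) = 2*ε by ring]
    have hb := intervalIntegral.norm_integral_le_of_norm_le_const (C := δψ)
      (a := -(2*ε)) (b := 0) (f := fun w => ψ (u + w) - L) ?_
    · rw [Real.norm_eq_abs, hsub, show (0:ℝ) - -(2*ε) = 2*ε by ring, abs_of_pos hε2] at hb
      linarith [hb]
    · intro w hw
      rw [uIoc_of_le (by linarith : -(2*ε) ≤ 0)] at hw
      rw [Real.norm_eq_abs]
      exact hψest (u + w) (abs_le.mpr ⟨by linarith [hw.1], by linarith [hw.2]⟩)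
  have hE3 : |(∫ u in (0:ℝ)..ε, ∫ w in (-(2*ε))..0, ψ (u + w)) - ε*(2*ε*L)|
      ≤ ε*(2*ε*δψ) := by
    have hsub : ∫ u in (0:ℝ)..ε, ((∫ w in (-(2*ε))..0, ψ (u + w)) - 2*ε*L)
        = (∫ u in (0:ℝ)..ε, ∫ w in (-(2*ε))..0, ψ (u + w)) - ε*(2*ε*L) := by
      rw [integral_sub (hΘc.intervalIntegrable _ _) intervalIntegrable_const,
        intervalIntegral.integral_const, smul_eq_mul, sub_zero]
    have hb := intervalIntegral.norm_integral_le_of_norm_le_const (C := 2*ε*δψ)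
      (a := (0:ℝ)) (b := ε) (f := fun u => (∫ w in (-(2*ε))..0, ψ (u + w)) - 2*ε*L) ?_
    · rw [Real.norm_eq_abs, hsub, sub_zero, abs_of_pos hε] at hb
      calc |(∫ u in (0:ℝ)..ε, ∫ w in (-(2*ε))..0, ψ (u + w)) - ε*(2*ε*L)|
          ≤ 2*ε*δψ * ε := hb
        _ = ε*(2*ε*δψ) := by ring
    · intro u hu
      rw [uIoc_of_le hε.le] at hu
      rw [Real.norm_eq_abs]
      exact hE3i u hu.1.le hu.2
  -- final assembly
  rw [hsplit, hsecond, hF1, hF2, Real.dist_eq]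
  set A1 : ℝ := ∫ t in (0:ℝ)..(2*ε), Φ t with hA1def
  set S1 : ℝ := ∫ r in (-ε)..ε, ψ r with hS1def
  set S2 : ℝ := ∫ u in (0:ℝ)..ε, ∫ w in (-(2*ε))..0, ψ (u + w) with hS2def
  have hsum : A1 + 1/(8*ε^2) * (ε * S1 + S2) - 1/2 * L
      = A1 + 1/(8*ε^2) * (ε * (S1 - 2*ε*L) + (S2 - ε*(2*ε*L))) := by
    field_simp
    ring
  rw [hsum]
  have c0 : (0:ℝ) ≤ 1/(8*ε^2) := by positivity
  have habs1 : |1/(8*ε^2) * (ε * (S1 - 2*ε*L) + (S2 - ε*(2*ε*L)))|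
      ≤ 1/(8*ε^2) * (ε*(2*ε*δψ) + ε*(2*ε*δψ)) := by
    rw [abs_mul, abs_of_nonneg c0]
    refine mul_le_mul_of_nonneg_left ?_ c0
    refine le_trans (abs_add_le _ _) ?_
    rw [abs_mul, abs_of_pos hε]
    have h1 := mul_le_mul_of_nonneg_left hE2 hε.le
    linarith [hE3]
  have hval : 1/(8*ε^2) * (ε*(2*ε*δψ) + ε*(2*ε*δψ)) = δψ/2 := by
    field_simp
    ring
  have htot : |A1 + 1/(8*ε^2) * (ε * (S1 - 2*ε*L) + (S2 - ε*(2*ε*L)))|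
      ≤ M*C*(2*ε) + δψ/2 := by
    refine le_trans (abs_add_le _ _) ?_
    rw [← hval]
    exact add_le_add hB1 habs1
  refine lt_of_le_of_lt htot ?_
  have hd1 : C*T*δ1 ≤ δ/4 := by
    rw [hδ1def, show C*T*(δ/(4*(C*T+1))) = δ*(C*T)/(4*(C*T+1)) by ring,
      div_le_div_iff₀ (by positivity) (by norm_num : (0:ℝ) < 4)]
    have h2 : 0 ≤ δ := hδ.le
    linarith [h2]
  have hMCε : (M*C+1)*ε < δ/8 := by
    have h1 := (lt_div_iff₀ (by positivity : (0:ℝ) < 8*(M*C+1))).mp hεδ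
    rw [lt_div_iff₀ (by norm_num : (0:ℝ) < 8)]
    linarith [h1]
  have hδψval : δψ/2 = 3*(M*C)*ε + C*T*δ1/2 := by simp only [hδψdef]; ring
  rw [hδψval]
  linarith [hMCε, hd1, hε.le, hδ]
end

section
/- Let T > 0, c, a, b ∈ ℂ, C > 0. Let g_ε (for ε in a sequence tending to 0) and g be measurable functions from [0,T] to [0,C] such that ∫₀^T φ(t) g_ε(t) dt → ∫₀^T φ(t) g(t) dt for every continuous φ : [0,T] → ℝ. Suppose e_ε : [0,T] → ℂ are continuous, satisfy e_ε(t) = c + a ∫₀^t e_ε(s) ds + b ∫₀^t e_ε(s) g_ε(s) ds for all t ∈ [0,T], and converge uniformly on [0,T] to a function e. Then e is continuous and satisfies the limit equation e(t) = c + a ∫₀^t e(s) ds + b ∫₀^t e(s) g(s) ds for all t ∈ [0,T]. -/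
open MeasureTheory Filter

/-- Integrability of a product of a continuous-on-`[0,T]` complex function with a
bounded measurable real density, on a subinterval. -/
lemma volterra_aux_integrable {T C M : ℝ} {f : ℝ → ℂ} {h : ℝ → ℝ}
    (hf : ContinuousOn f (Set.Icc 0 T))
    (hfM : ∀ s ∈ Set.Icc (0:ℝ) T, ‖f s‖ ≤ M)
    (hh : Measurable h) (hhb : ∀ s ∈ Set.Icc (0:ℝ) T, |h s| ≤ C)
    {u v : ℝ} (hu : 0 ≤ u) (huv : u ≤ v) (hv : v ≤ T) :
    IntervalIntegrable (fun s => f s * (h s : ℂ)) volume u v := by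
  rw [intervalIntegrable_iff_integrableOn_Ioc_of_le huv]
  have hsub : Set.Ioc u v ⊆ Set.Icc 0 T := fun s hs => ⟨hu.trans hs.1.le, hs.2.trans hv⟩
  refine ⟨(((hf.mono hsub).aemeasurable measurableSet_Ioc).mul
      ((Complex.measurable_ofReal.comp hh).aemeasurable)).aestronglyMeasurable, ?_⟩
  apply MeasureTheory.HasFiniteIntegral.restrict_of_bounded (C := M * C) measure_Ioc_lt_top
  refine (ae_restrict_iff' measurableSet_Ioc).mpr (ae_of_all _ fun s hs => ?_)
  have hs' := hsub hs
  have h1 : ‖f s * (h s : ℂ)‖ = ‖f s‖ * |h s| := by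
    rw [norm_mul, Complex.norm_real, Real.norm_eq_abs]
  rw [h1]
  exact mul_le_mul (hfM s hs') (hhb s hs') (abs_nonneg _) ((norm_nonneg _).trans (hfM s hs'))

/-- Real version of `volterra_aux_integrable`. -/
lemma volterra_aux_integrableR {T C M : ℝ} {φ h : ℝ → ℝ}
    (hφ : ContinuousOn φ (Set.Icc 0 T))
    (hφM : ∀ s ∈ Set.Icc (0:ℝ) T, |φ s| ≤ M)
    (hh : Measurable h) (hhb : ∀ s ∈ Set.Icc (0:ℝ) T, |h s| ≤ C)
    {u v : ℝ} (hu : 0 ≤ u) (huv : u ≤ v) (hv : v ≤ T) :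
    IntervalIntegrable (fun s => φ s * h s) volume u v := by
  rw [intervalIntegrable_iff_integrableOn_Ioc_of_le huv]
  have hsub : Set.Ioc u v ⊆ Set.Icc 0 T := fun s hs => ⟨hu.trans hs.1.le, hs.2.trans hv⟩
  refine ⟨(((hφ.mono hsub).aemeasurable measurableSet_Ioc).mul
      hh.aemeasurable).aestronglyMeasurable, ?_⟩
  apply MeasureTheory.HasFiniteIntegral.restrict_of_bounded (C := M * C) measure_Ioc_lt_top
  refine (ae_restrict_iff' measurableSet_Ioc).mpr (ae_of_all _ fun s hs => ?_)
  have hs' := hsub hs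
  have h1 : ‖φ s * h s‖ = |φ s| * |h s| := by
    rw [Real.norm_eq_abs, abs_mul]
  rw [h1]
  exact mul_le_mul (hφM s hs') (hhb s hs') (abs_nonneg _) ((abs_nonneg _).trans (hφM s hs'))

/-- Cutoff estimate: replacing `∫₀^t φ h` by `∫₀^T (ψ φ) h` with `ψ` a cutoff costs
at most `M * C * δ`. -/
lemma volterra_cutoff_est {T C M δ t : ℝ} (hC : 0 ≤ C) (hM : 0 ≤ M) (hδ : 0 < δ)
    (ht : t ∈ Set.Icc 0 T)
    {φ ψ h : ℝ → ℝ} (hφ : ContinuousOn φ (Set.Icc 0 T))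
    (hφM : ∀ s ∈ Set.Icc (0:ℝ) T, |φ s| ≤ M)
    (hψ : Continuous ψ) (hψ01 : ∀ s, ψ s ∈ Set.Icc (0:ℝ) 1)
    (hψ1 : ∀ s, s ≤ t - δ → ψ s = 1) (hψ0 : ∀ s, t ≤ s → ψ s = 0)
    (hh : Measurable h) (hhb : ∀ s ∈ Set.Icc (0:ℝ) T, |h s| ≤ C) :
    |(∫ s in (0:ℝ)..t, φ s * h s) - ∫ s in (0:ℝ)..T, ψ s * φ s * h s| ≤ M * C * δ := by
  obtain ⟨ht0, htT⟩ := ht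
  have hψφcont : ContinuousOn (fun s => ψ s * φ s) (Set.Icc 0 T) :=
    hψ.continuousOn.mul hφ
  have hψφM : ∀ s ∈ Set.Icc (0:ℝ) T, |ψ s * φ s| ≤ M := by
    intro s hs
    rw [abs_mul]
    calc |ψ s| * |φ s| ≤ 1 * M :=
          mul_le_mul (abs_le.mpr ⟨by linarith [(hψ01 s).1], (hψ01 s).2⟩) (hφM s hs)
            (abs_nonneg _) zero_le_one
      _ = M := one_mul M
  -- The integral over [t, T] of ψ φ h vanishes.
  have hzero : (∫ s in t..T, ψ s * φ s * h s) = 0 := by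
    rw [intervalIntegral.integral_congr (g := fun _ => (0:ℝ))
      (fun s hs => ?_), intervalIntegral.integral_zero]
    rw [Set.uIcc_of_le htT] at hs
    rw [hψ0 s hs.1, zero_mul, zero_mul]
  have hint1 : IntervalIntegrable (fun s => ψ s * φ s * h s) volume 0 t :=
    volterra_aux_integrableR hψφcont hψφM hh hhb le_rfl ht0 htT
  have hint2 : IntervalIntegrable (fun s => ψ s * φ s * h s) volume t T :=
    volterra_aux_integrableR hψφcont hψφM hh hhb ht0 htT le_rfl
  have hsplit : (∫ s in (0:ℝ)..T, ψ s * φ s * h s)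
      = ∫ s in (0:ℝ)..t, ψ s * φ s * h s := by
    rw [← intervalIntegral.integral_add_adjacent_intervals hint1 hint2, hzero, add_zero]
  rw [hsplit]
  have hintφ : IntervalIntegrable (fun s => φ s * h s) volume 0 t :=
    volterra_aux_integrableR hφ hφM hh hhb le_rfl ht0 htT
  rw [← intervalIntegral.integral_sub hintφ hint1]
  -- the integrand is `(1 - ψ) φ h`, supported in `[t - δ, t]` and bounded by `M * C`
  set t₀ : ℝ := max (t - δ) 0 with ht₀def
  have ht₀0 : 0 ≤ t₀ := le_max_right _ _
  have ht₀t : t₀ ≤ t := max_le (by linarith) ht0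
  have ht₀T : t₀ ≤ T := ht₀t.trans htT
  have hδ' : t - t₀ ≤ δ := by
    have : t - δ ≤ t₀ := le_max_left _ _
    linarith
  have hintd1 : IntervalIntegrable (fun s => φ s * h s - ψ s * φ s * h s) volume 0 t₀ :=
    (volterra_aux_integrableR hφ hφM hh hhb le_rfl ht₀0 ht₀T).sub
      (volterra_aux_integrableR hψφcont hψφM hh hhb le_rfl ht₀0 ht₀T)
  have hintd2 : IntervalIntegrable (fun s => φ s * h s - ψ s * φ s * h s) volume t₀ t :=
    (volterra_aux_integrableR hφ hφM hh hhb ht₀0 ht₀t htT).sub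
      (volterra_aux_integrableR hψφcont hψφM hh hhb ht₀0 ht₀t htT)
  have hfirst : (∫ s in (0:ℝ)..t₀, φ s * h s - ψ s * φ s * h s) = 0 := by
    rcases le_or_gt (t - δ) 0 with hcase | hcase
    · have : t₀ = 0 := max_eq_right hcase
      rw [this, intervalIntegral.integral_same]
    · have ht₀eq : t₀ = t - δ := max_eq_left hcase.le
      rw [intervalIntegral.integral_congr (g := fun _ => (0:ℝ)) (fun s hs => ?_),
        intervalIntegral.integral_zero]
      rw [Set.uIcc_of_le ht₀0] at hs
      have : ψ s = 1 := hψ1 s (by rw [← ht₀eq]; exact hs.2)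
      rw [this, one_mul]
      ring
  have hsplit2 : (∫ s in (0:ℝ)..t, φ s * h s - ψ s * φ s * h s)
      = ∫ s in t₀..t, φ s * h s - ψ s * φ s * h s := by
    rw [← intervalIntegral.integral_add_adjacent_intervals hintd1 hintd2, hfirst, zero_add]
  rw [hsplit2]
  have hbound : ∀ s ∈ Set.uIoc t₀ t, ‖φ s * h s - ψ s * φ s * h s‖ ≤ M * C := by
    intro s hs
    rw [Set.uIoc_of_le ht₀t] at hs
    have hs' : s ∈ Set.Icc (0:ℝ) T := ⟨ht₀0.trans hs.1.le, hs.2.trans htT⟩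
    have : φ s * h s - ψ s * φ s * h s = (1 - ψ s) * (φ s * h s) := by ring
    rw [this, Real.norm_eq_abs, abs_mul, abs_mul]
    have h1ψ : |1 - ψ s| ≤ 1 := by
      rw [abs_le]; constructor <;> [linarith [(hψ01 s).2]; linarith [(hψ01 s).1]]
    calc |1 - ψ s| * (|φ s| * |h s|)
        ≤ 1 * (M * C) := by
          apply mul_le_mul h1ψ (mul_le_mul (hφM s hs') (hhb s hs') (abs_nonneg _)
            ((abs_nonneg _).trans (hφM s hs'))) (by positivity) zero_le_one
      _ = M * C := one_mul _
  calc |∫ s in t₀..t, φ s * h s - ψ s * φ s * h s|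
      ≤ M * C * |t - t₀| := intervalIntegral.norm_integral_le_of_norm_le_const hbound
    _ ≤ M * C * δ := by
        apply mul_le_mul_of_nonneg_left _ (by positivity)
        rw [abs_of_nonneg (by linarith)]
        exact hδ'

/-- Weak-star convergence against continuous test functions extends to
integrals over subintervals `[0,t]`. -/
lemma volterra_weak_sub {T C : ℝ} (hT : 0 < T) (hC : 0 < C)
    {gε : ℕ → ℝ → ℝ} {g : ℝ → ℝ}
    (hgεmeas : ∀ n, Measurable (gε n)) (hgmeas : Measurable g)
    (hgεbound : ∀ n, ∀ t ∈ Set.Icc (0:ℝ) T, gε n t ∈ Set.Icc (0:ℝ) C)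
    (hgbound : ∀ t ∈ Set.Icc (0:ℝ) T, g t ∈ Set.Icc (0:ℝ) C)
    (hweak : ∀ φ : ℝ → ℝ, ContinuousOn φ (Set.Icc 0 T) →
      Tendsto (fun n => ∫ t in (0:ℝ)..T, φ t * gε n t) atTop
        (nhds (∫ t in (0:ℝ)..T, φ t * g t)))
    {φ : ℝ → ℝ} (hφ : ContinuousOn φ (Set.Icc 0 T))
    {t : ℝ} (ht : t ∈ Set.Icc (0:ℝ) T) :
    Tendsto (fun n => ∫ s in (0:ℝ)..t, φ s * gε n s) atTop
      (nhds (∫ s in (0:ℝ)..t, φ s * g s)) := by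
  obtain ⟨M₀, hM₀⟩ := isCompact_Icc.exists_bound_of_continuousOn hφ
  set M : ℝ := max M₀ 0 with hMdef
  have hM0 : 0 ≤ M := le_max_right _ _
  have hM : ∀ s ∈ Set.Icc (0:ℝ) T, |φ s| ≤ M := by
    intro s hs
    have h1 : |φ s| ≤ M₀ := by simpa [Real.norm_eq_abs] using hM₀ s hs
    exact h1.trans (le_max_left _ _)
  have hgεb : ∀ n, ∀ s ∈ Set.Icc (0:ℝ) T, |gε n s| ≤ C := fun n s hs =>
    abs_le.mpr ⟨by linarith [(hgεbound n s hs).1, hC.le], (hgεbound n s hs).2⟩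
  have hgb : ∀ s ∈ Set.Icc (0:ℝ) T, |g s| ≤ C := fun s hs =>
    abs_le.mpr ⟨by linarith [(hgbound s hs).1, hC.le], (hgbound s hs).2⟩
  rw [Metric.tendsto_atTop]
  intro η hη
  set δ : ℝ := η / (3 * (M + 1) * (C + 1)) with hδdef
  have hδ : 0 < δ := by positivity
  set ψ : ℝ → ℝ := fun s => min 1 (max 0 ((t - s) / δ)) with hψdef
  have hψcont : Continuous ψ :=
    continuous_const.min (continuous_const.max ((continuous_const.sub continuous_id).div_const δ))
  have hψ01 : ∀ s, ψ s ∈ Set.Icc (0:ℝ) 1 :=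
    fun s => ⟨le_min zero_le_one (le_max_left _ _), min_le_left _ _⟩
  have hψ1 : ∀ s, s ≤ t - δ → ψ s = 1 := by
    intro s hs
    have h1 : (1:ℝ) ≤ (t - s) / δ := (one_le_div hδ).mpr (by linarith)
    rw [hψdef]
    simp only
    rw [max_eq_right (zero_le_one.trans h1), min_eq_left h1]
  have hψ0 : ∀ s, t ≤ s → ψ s = 0 := by
    intro s hs
    have h1 : (t - s) / δ ≤ 0 := div_nonpos_of_nonpos_of_nonneg (by linarith) hδ.le
    rw [hψdef]
    simp only
    rw [max_eq_left h1, min_eq_right zero_le_one]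
  have hmid := hweak (fun s => ψ s * φ s) (hψcont.continuousOn.mul hφ)
  rw [Metric.tendsto_atTop] at hmid
  obtain ⟨N, hN⟩ := hmid (η / 3) (by positivity)
  refine ⟨N, fun n hn => ?_⟩
  have key : M * C * δ ≤ η / 3 := by
    have h1 : M * C ≤ (M + 1) * (C + 1) := by nlinarith [hC.le]
    have h2 : (M + 1) * (C + 1) * δ = η / 3 := by
      rw [hδdef]; field_simp
    calc M * C * δ ≤ (M + 1) * (C + 1) * δ := mul_le_mul_of_nonneg_right h1 hδ.le
      _ = η / 3 := h2
  have e1 : |(∫ s in (0:ℝ)..t, φ s * gε n s) - ∫ s in (0:ℝ)..T, ψ s * φ s * gε n s|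
      ≤ M * C * δ :=
    volterra_cutoff_est hC.le hM0 hδ ht hφ hM hψcont hψ01 hψ1 hψ0 (hgεmeas n) (hgεb n)
  have e3 : |(∫ s in (0:ℝ)..t, φ s * g s) - ∫ s in (0:ℝ)..T, ψ s * φ s * g s|
      ≤ M * C * δ :=
    volterra_cutoff_est hC.le hM0 hδ ht hφ hM hψcont hψ01 hψ1 hψ0 hgmeas hgb
  have e2 : |(∫ s in (0:ℝ)..T, ψ s * φ s * gε n s) - ∫ s in (0:ℝ)..T, ψ s * φ s * g s|
      < η / 3 := by
    have := hN n hn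
    rw [Real.dist_eq] at this
    exact this
  have e3' : |(∫ s in (0:ℝ)..T, ψ s * φ s * g s) - ∫ s in (0:ℝ)..t, φ s * g s|
      ≤ M * C * δ := by rw [abs_sub_comm]; exact e3
  rw [Real.dist_eq]
  have htri := abs_sub_le ((∫ s in (0:ℝ)..t, φ s * gε n s))
    (∫ s in (0:ℝ)..T, ψ s * φ s * g s) (∫ s in (0:ℝ)..t, φ s * g s)
  have htri2 := abs_sub_le ((∫ s in (0:ℝ)..t, φ s * gε n s))
    (∫ s in (0:ℝ)..T, ψ s * φ s * gε n s) (∫ s in (0:ℝ)..T, ψ s * φ s * g s)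
  linarith

/-- Complex-valued version of `volterra_weak_sub`. -/
lemma volterra_weak_subC {T C : ℝ} (hT : 0 < T) (hC : 0 < C)
    {gε : ℕ → ℝ → ℝ} {g : ℝ → ℝ}
    (hgεmeas : ∀ n, Measurable (gε n)) (hgmeas : Measurable g)
    (hgεbound : ∀ n, ∀ t ∈ Set.Icc (0:ℝ) T, gε n t ∈ Set.Icc (0:ℝ) C)
    (hgbound : ∀ t ∈ Set.Icc (0:ℝ) T, g t ∈ Set.Icc (0:ℝ) C)
    (hweak : ∀ φ : ℝ → ℝ, ContinuousOn φ (Set.Icc 0 T) →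
      Tendsto (fun n => ∫ t in (0:ℝ)..T, φ t * gε n t) atTop
        (nhds (∫ t in (0:ℝ)..T, φ t * g t)))
    {f : ℝ → ℂ} (hf : ContinuousOn f (Set.Icc 0 T))
    {t : ℝ} (ht : t ∈ Set.Icc (0:ℝ) T) :
    Tendsto (fun n => ∫ s in (0:ℝ)..t, f s * (gε n s : ℂ)) atTop
      (nhds (∫ s in (0:ℝ)..t, f s * (g s : ℂ))) := by
  obtain ⟨M₀, hM₀⟩ := isCompact_Icc.exists_bound_of_continuousOn hf
  have hgεb : ∀ n, ∀ s ∈ Set.Icc (0:ℝ) T, |gε n s| ≤ C := fun n s hs =>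
    abs_le.mpr ⟨by linarith [(hgεbound n s hs).1, hC.le], (hgεbound n s hs).2⟩
  have hgb : ∀ s ∈ Set.Icc (0:ℝ) T, |g s| ≤ C := fun s hs =>
    abs_le.mpr ⟨by linarith [(hgbound s hs).1, hC.le], (hgbound s hs).2⟩
  -- decomposition into real and imaginary parts
  have heq : ∀ h : ℝ → ℝ, Measurable h → (∀ s ∈ Set.Icc (0:ℝ) T, |h s| ≤ C) →
      (∫ s in (0:ℝ)..t, f s * (h s : ℂ))
        = ((∫ s in (0:ℝ)..t, (f s).re * h s : ℝ) : ℂ)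
          + ((∫ s in (0:ℝ)..t, (f s).im * h s : ℝ) : ℂ) * Complex.I := by
    intro h hmeas hb
    have hint : IntervalIntegrable (fun s => f s * (h s : ℂ)) volume 0 t :=
      volterra_aux_integrable hf hM₀ hmeas hb le_rfl ht.1 ht.2
    have h1 := Complex.reCLM.intervalIntegral_comp_comm hint
    have h2 := Complex.imCLM.intervalIntegral_comp_comm hint
    simp only [Complex.reCLM_apply] at h1
    simp only [Complex.imCLM_apply] at h2
    have hre : (∫ s in (0:ℝ)..t, f s * (h s : ℂ)).re
        = ∫ s in (0:ℝ)..t, (f s).re * h s := by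
      rw [← h1]
      apply intervalIntegral.integral_congr
      intro s _
      simp [Complex.mul_re]
    have him : (∫ s in (0:ℝ)..t, f s * (h s : ℂ)).im
        = ∫ s in (0:ℝ)..t, (f s).im * h s := by
      rw [← h2]
      apply intervalIntegral.integral_congr
      intro s _
      simp [Complex.mul_im]
    rw [← hre, ← him, Complex.re_add_im]
  have hRe := volterra_weak_sub hT hC hgεmeas hgmeas hgεbound hgbound hweak
    (φ := fun s => (f s).re) (Complex.continuous_re.comp_continuousOn hf) ht
  have hIm := volterra_weak_sub hT hC hgεmeas hgmeas hgεbound hgbound hweak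
    (φ := fun s => (f s).im) (Complex.continuous_im.comp_continuousOn hf) ht
  have hcomb : Tendsto (fun n =>
      ((∫ s in (0:ℝ)..t, (f s).re * gε n s : ℝ) : ℂ)
        + ((∫ s in (0:ℝ)..t, (f s).im * gε n s : ℝ) : ℂ) * Complex.I) atTop
      (nhds (((∫ s in (0:ℝ)..t, (f s).re * g s : ℝ) : ℂ)
        + ((∫ s in (0:ℝ)..t, (f s).im * g s : ℝ) : ℂ) * Complex.I)) :=
    ((Complex.continuous_ofReal.tendsto _).comp hRe).add
      (((Complex.continuous_ofReal.tendsto _).comp hIm).mul_const _)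
  have hfun : (fun n => ∫ s in (0:ℝ)..t, f s * (gε n s : ℂ))
      = fun n => ((∫ s in (0:ℝ)..t, (f s).re * gε n s : ℝ) : ℂ)
        + ((∫ s in (0:ℝ)..t, (f s).im * gε n s : ℝ) : ℂ) * Complex.I :=
    funext fun n => heq (gε n) (hgεmeas n) (hgεb n)
  rw [hfun, heq g hgmeas hgb]
  exact hcomb

/-- Stability of the linear Volterra equation under weak-star convergence of the
densities: if `gₙ, g : [0,T] → [0,C]` with `∫₀^T φ gₙ → ∫₀^T φ g` for every
continuous `φ`, and the continuous solutions `eₙ` of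
`eₙ(t) = c + a ∫₀^t eₙ + b ∫₀^t eₙ gₙ` converge uniformly to `e` on `[0,T]`, then
`e` is continuous and solves `e(t) = c + a ∫₀^t e + b ∫₀^t e g` on `[0,T]`. -/
theorem volterra_stability_weakStar
    (T : ℝ) (hT : 0 < T) (c a b : ℂ) (C : ℝ) (hC : 0 < C)
    (gε : ℕ → ℝ → ℝ) (g : ℝ → ℝ)
    (hgεmeas : ∀ n, Measurable (gε n)) (hgmeas : Measurable g)
    (hgεbound : ∀ n, ∀ t ∈ Set.Icc (0:ℝ) T, gε n t ∈ Set.Icc (0:ℝ) C)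
    (hgbound : ∀ t ∈ Set.Icc (0:ℝ) T, g t ∈ Set.Icc (0:ℝ) C)
    (hweak : ∀ φ : ℝ → ℝ, ContinuousOn φ (Set.Icc 0 T) →
      Tendsto (fun n => ∫ t in (0:ℝ)..T, φ t * gε n t) atTop
        (nhds (∫ t in (0:ℝ)..T, φ t * g t)))
    (eε : ℕ → ℝ → ℂ) (e : ℝ → ℂ)
    (heεcont : ∀ n, ContinuousOn (eε n) (Set.Icc 0 T))
    (heεeq : ∀ n, ∀ t ∈ Set.Icc (0:ℝ) T,
      eε n t = c + a * (∫ s in (0:ℝ)..t, eε n s)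
        + b * ∫ s in (0:ℝ)..t, eε n s * (gε n s : ℂ))
    (hunif : TendstoUniformlyOn eε e atTop (Set.Icc 0 T)) :
    ContinuousOn e (Set.Icc 0 T) ∧
    ∀ t ∈ Set.Icc (0:ℝ) T,
      e t = c + a * (∫ s in (0:ℝ)..t, e s)
        + b * ∫ s in (0:ℝ)..t, e s * (g s : ℂ) := by
  have hecont : ContinuousOn e (Set.Icc 0 T) :=
    hunif.continuousOn (Filter.Eventually.of_forall heεcont).frequently
  refine ⟨hecont, fun t ht => ?_⟩
  have hgεb : ∀ n, ∀ s ∈ Set.Icc (0:ℝ) T, |gε n s| ≤ C := fun n s hs =>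
    abs_le.mpr ⟨by linarith [(hgεbound n s hs).1, hC.le], (hgεbound n s hs).2⟩
  have hgb : ∀ s ∈ Set.Icc (0:ℝ) T, |g s| ≤ C := fun s hs =>
    abs_le.mpr ⟨by linarith [(hgbound s hs).1, hC.le], (hgbound s hs).2⟩
  obtain ⟨ht0, htT⟩ := ht
  -- uniform convergence in metric form
  rw [Metric.tendstoUniformlyOn_iff] at hunif
  -- convergence of the three terms
  have h1 : Tendsto (fun n => eε n t) atTop (nhds (e t)) := by
    rw [Metric.tendsto_atTop]
    intro η hη
    obtain ⟨N, hN⟩ := Filter.eventually_atTop.mp (hunif η hη)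
    exact ⟨N, fun n hn => by rw [dist_comm]; exact hN n hn t ⟨ht0, htT⟩⟩
  have h2 : Tendsto (fun n => ∫ s in (0:ℝ)..t, eε n s) atTop
      (nhds (∫ s in (0:ℝ)..t, e s)) := by
    rw [Metric.tendsto_atTop]
    intro η hη
    have hη' : 0 < η / (T + 1) := by positivity
    obtain ⟨N, hN⟩ := Filter.eventually_atTop.mp (hunif (η / (T + 1)) hη')
    refine ⟨N, fun n hn => ?_⟩
    have hsub : Set.uIcc (0:ℝ) t ⊆ Set.Icc 0 T := by
      rw [Set.uIcc_of_le ht0]; exact Set.Icc_subset_Icc le_rfl htT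
    have hinteε : IntervalIntegrable (eε n) volume 0 t :=
      ((heεcont n).mono hsub).intervalIntegrable
    have hinte : IntervalIntegrable e volume 0 t :=
      (hecont.mono hsub).intervalIntegrable
    rw [dist_eq_norm, ← intervalIntegral.integral_sub hinteε hinte]
    have hb : ∀ s ∈ Set.uIoc (0:ℝ) t, ‖eε n s - e s‖ ≤ η / (T + 1) := by
      intro s hs
      rw [Set.uIoc_of_le ht0] at hs
      have := hN n hn s ⟨hs.1.le, hs.2.trans htT⟩
      rw [dist_comm, dist_eq_norm] at this
      exact this.le
    calc ‖∫ s in (0:ℝ)..t, eε n s - e s‖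
        ≤ η / (T + 1) * |t - 0| := intervalIntegral.norm_integral_le_of_norm_le_const hb
      _ < η := by
          rw [sub_zero, abs_of_nonneg ht0]
          rw [div_mul_eq_mul_div, div_lt_iff₀ (by linarith)]
          nlinarith
  have h3 : Tendsto (fun n => ∫ s in (0:ℝ)..t, eε n s * (gε n s : ℂ)) atTop
      (nhds (∫ s in (0:ℝ)..t, e s * (g s : ℂ))) := by
    have hA : Tendsto (fun n => ∫ s in (0:ℝ)..t, e s * (gε n s : ℂ)) atTop
        (nhds (∫ s in (0:ℝ)..t, e s * (g s : ℂ))) :=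
      volterra_weak_subC hT hC hgεmeas hgmeas hgεbound hgbound hweak hecont ⟨ht0, htT⟩
    have hB : Tendsto (fun n => (∫ s in (0:ℝ)..t, eε n s * (gε n s : ℂ))
        - ∫ s in (0:ℝ)..t, e s * (gε n s : ℂ)) atTop (nhds 0) := by
      rw [Metric.tendsto_atTop]
      intro η hη
      have hη' : 0 < η / ((T + 1) * (C + 1)) := by positivity
      obtain ⟨N, hN⟩ := Filter.eventually_atTop.mp (hunif (η / ((T + 1) * (C + 1))) hη')
      refine ⟨N, fun n hn => ?_⟩
      obtain ⟨Mn, hMn⟩ := isCompact_Icc.exists_bound_of_continuousOn (heεcont n)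
      obtain ⟨Me, hMe⟩ := isCompact_Icc.exists_bound_of_continuousOn hecont
      have hintn : IntervalIntegrable (fun s => eε n s * (gε n s : ℂ)) volume 0 t :=
        volterra_aux_integrable (heεcont n) hMn (hgεmeas n) (hgεb n) le_rfl ht0 htT
      have hinte : IntervalIntegrable (fun s => e s * (gε n s : ℂ)) volume 0 t :=
        volterra_aux_integrable hecont hMe (hgεmeas n) (hgεb n) le_rfl ht0 htT
      rw [dist_eq_norm, sub_zero, ← intervalIntegral.integral_sub hintn hinte]
      have hb : ∀ s ∈ Set.uIoc (0:ℝ) t,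
          ‖eε n s * (gε n s : ℂ) - e s * (gε n s : ℂ)‖ ≤ η / ((T + 1) * (C + 1)) * C := by
        intro s hs
        rw [Set.uIoc_of_le ht0] at hs
        have hs' : s ∈ Set.Icc (0:ℝ) T := ⟨hs.1.le, hs.2.trans htT⟩
        have hd := hN n hn s hs'
        rw [dist_comm, dist_eq_norm] at hd
        have : eε n s * (gε n s : ℂ) - e s * (gε n s : ℂ)
            = (eε n s - e s) * (gε n s : ℂ) := by ring
        rw [this, norm_mul, Complex.norm_real, Real.norm_eq_abs]
        exact mul_le_mul hd.le (hgεb n s hs') (abs_nonneg _) hη'.le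
      calc ‖∫ s in (0:ℝ)..t, eε n s * (gε n s : ℂ) - e s * (gε n s : ℂ)‖
          ≤ η / ((T + 1) * (C + 1)) * C * |t - 0| :=
            intervalIntegral.norm_integral_le_of_norm_le_const hb
        _ < η := by
            rw [sub_zero, abs_of_nonneg ht0]
            rw [div_mul_eq_mul_div, div_mul_eq_mul_div, div_lt_iff₀ (by positivity)]
            nlinarith [mul_le_mul_of_nonneg_left htT (mul_nonneg hη.le hC.le),
              mul_pos hη hC, mul_pos hη hT]
    have := hB.add hA
    rw [zero_add] at this
    refine this.congr fun n => ?_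
    ring
  -- pass to the limit in the equation
  have hlhs : Tendsto (fun n => eε n t) atTop
      (nhds (c + a * (∫ s in (0:ℝ)..t, e s) + b * ∫ s in (0:ℝ)..t, e s * (g s : ℂ))) := by
    have : Tendsto (fun n => c + a * (∫ s in (0:ℝ)..t, eε n s)
        + b * ∫ s in (0:ℝ)..t, eε n s * (gε n s : ℂ)) atTop
        (nhds (c + a * (∫ s in (0:ℝ)..t, e s)
          + b * ∫ s in (0:ℝ)..t, e s * (g s : ℂ))) :=
      ((tendsto_const_nhds.add (h2.const_mul a)).add (h3.const_mul b))
    exact this.congr fun n => (heεeq n t ⟨ht0, htT⟩).symm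
  exact tendsto_nhds_unique h1 hlhs
end

section
/- Let κ ≥ 0, K finite, σ_k ∈ ℝ² for k ∈ K, σ²(ξ) = Σ_k ⟨σ_k,ξ⟩², ρ(ξ,η) = Σ_k ⟨σ_k,ξ⟩⟨σ_k,η⟩, let g : [0,∞) → [0,C] be measurable with γ(t) = ∫₀^t g, and let θ̂₀ : ℝ² → ℂ. Define e(t,ξ) = θ̂₀(ξ) exp(−κ‖ξ‖²t − (1/2)σ²(ξ)γ(t)) and the covariance function C(t,ξ,η) = θ̂₀(ξ) \overline{θ̂₀(η)} · exp(−κ(‖ξ‖²+‖η‖²)t) · ( exp(−(1/2)σ²(ξ−η)γ(t)) − exp(−(1/2)(σ²(ξ)+σ²(η))γ(t)) ). Then for all t ≥ 0 and ξ, η ∈ ℝ²: C(t,ξ,η) = −κ(‖ξ‖²+‖η‖²) ∫₀^t C(s,ξ,η) ds − (1/2) σ²(ξ−η) ∫₀^t C(s,ξ,η) g(s) ds + ρ(ξ,η) ∫₀^t e(s,ξ) \overline{e(s,η)} g(s) ds. -/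
open MeasureTheory Set intervalIntegral
open scoped Nat

lemma integrableOn_of_bdd {f : ℝ → ℝ} {S : Set ℝ} (hf : Measurable f) (hS : MeasurableSet S)
    (hfin : volume S ≠ ⊤) {M : ℝ} (h : ∀ s ∈ S, |f s| ≤ M) : IntegrableOn f S := by
  refine Integrable.mono' (integrableOn_const hfin) (hf.aestronglyMeasurable.restrict)
    ((ae_restrict_iff' hS).2 (ae_of_all _ h))

lemma intervalIntegrable_of_bdd {f : ℝ → ℝ} (hf : Measurable f) {M : ℝ}
    (h : ∀ s, |f s| ≤ M) (a b : ℝ) : IntervalIntegrable f volume a b := by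
  rw [intervalIntegrable_iff]
  exact integrableOn_of_bdd hf measurableSet_uIoc (by
    rw [Set.uIoc_eq_union]
    exact ne_top_of_le_ne_top (by simp [measure_Ioc_lt_top.ne]) (measure_union_le _ _))
    (fun s _ => h s)

example : True := trivial

lemma pow_succ_integral_rec (w : ℝ → ℝ) (hw : Measurable w) {M : ℝ} (hbd : ∀ s, |w s| ≤ M) :
    ∀ n : ℕ, ∀ s : ℝ, 0 ≤ s →
      (∫ r in (0:ℝ)..s, w r) ^ (n + 1)
        = ((n : ℝ) + 1) * ∫ r in Ioc (0:ℝ) s, w r * (∫ x in (0:ℝ)..r, w x) ^ n := by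
  have hM : 0 ≤ M := le_trans (abs_nonneg _) (hbd 0)
  have hii : ∀ a b : ℝ, IntervalIntegrable w volume a b := intervalIntegrable_of_bdd hw hbd
  set u : ℝ → ℝ := fun r => ∫ x in (0:ℝ)..r, w x with hu
  have hucont : Continuous u := intervalIntegral.continuous_primitive hii 0
  intro n
  induction n with
  | zero =>
    intro s hs
    simp only [pow_one, Nat.cast_zero, zero_add, pow_zero, mul_one, one_mul,
      integral_of_le hs]
  | succ n ih =>
    intro s hs
    have hubd : ∀ r ∈ Set.Icc (0:ℝ) s, |u r| ≤ M * s := by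
      intro r hr
      have h0 : ‖∫ x in (0:ℝ)..r, w x‖ ≤ M * |r - 0| :=
        intervalIntegral.norm_integral_le_of_norm_le_const (fun x _ => hbd x)
      rw [Real.norm_eq_abs] at h0
      calc |u r| ≤ M * |r - 0| := h0
        _ ≤ M * s := by
            rw [sub_zero, abs_of_nonneg hr.1]
            exact mul_le_mul_of_nonneg_left hr.2 hM
    have hIoc : MeasurableSet (Set.Ioc (0:ℝ) s) := measurableSet_Ioc
    have hfin : volume (Set.Ioc (0:ℝ) s) ≠ ⊤ := measure_Ioc_lt_top.ne
    have humeas : Measurable u := hucont.measurable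
    have hcmeas : Measurable fun r => w r * u r ^ n := hw.mul (humeas.pow_const n)
    -- Fubini on the triangle
    have hswap :
        (∫ x in Set.Ioc (0:ℝ) s, ∫ r in Set.Ioc (0:ℝ) s,
            (if r ≤ x then w x * (w r * u r ^ n) else 0))
          = ∫ r in Set.Ioc (0:ℝ) s, ∫ x in Set.Ioc (0:ℝ) s,
            (if r ≤ x then w x * (w r * u r ^ n) else 0) := by
      apply MeasureTheory.integral_integral_swap
      have hmeas : Measurable (fun p : ℝ × ℝ =>
          if p.2 ≤ p.1 then w p.1 * (w p.2 * u p.2 ^ n) else 0) := by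
        refine Measurable.ite (measurableSet_le measurable_snd measurable_fst) ?_ measurable_const
        exact (hw.comp measurable_fst).mul
          ((hw.comp measurable_snd).mul ((humeas.comp measurable_snd).pow_const n))
      have hprod : (volume.restrict (Set.Ioc (0:ℝ) s)).prod (volume.restrict (Set.Ioc (0:ℝ) s))
          = (volume.prod volume).restrict (Set.Ioc (0:ℝ) s ×ˢ Set.Ioc (0:ℝ) s) :=
        Measure.prod_restrict _ _
      rw [Function.uncurry_def, hprod]
      refine Integrable.mono' (g := fun _ => M * (M * (M * s) ^ n))
        (integrableOn_const ?_)
        hmeas.aestronglyMeasurable.restrict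
        ((ae_restrict_iff' (hIoc.prod hIoc)).2 (ae_of_all _ ?_))
      · rw [Measure.prod_prod]
        exact (ENNReal.mul_lt_top measure_Ioc_lt_top measure_Ioc_lt_top).ne
      · rintro ⟨x, r⟩ ⟨hx, hr⟩
        by_cases h : r ≤ x
        · simp only [h, if_true, Real.norm_eq_abs, abs_mul, abs_pow]
          have h1 := hbd x
          have h2 := hbd r
          have h3 : |u r| ≤ M * s := hubd r ⟨hr.1.le, hr.2⟩
          have h4 : |u r| ^ n ≤ (M * s) ^ n := pow_le_pow_left₀ (abs_nonneg _) h3 n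
          have h5 : 0 ≤ |u r| ^ n := pow_nonneg (abs_nonneg _) n
          exact mul_le_mul h1 (mul_le_mul h2 h4 h5 hM)
            (mul_nonneg (abs_nonneg _) h5) hM
        · simp only [h, if_false, norm_zero]
          positivity
    -- evaluate the inner integrals
    have hL : ∀ x ∈ Set.Ioc (0:ℝ) s,
        (∫ r in Set.Ioc (0:ℝ) s, (if r ≤ x then w x * (w r * u r ^ n) else 0))
          = w x * ∫ r in Set.Ioc (0:ℝ) x, w r * u r ^ n := by
      intro x hx
      have hind : (fun r => if r ≤ x then w x * (w r * u r ^ n) else 0)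
          = Set.indicator (Set.Iic x) (fun r => w x * (w r * u r ^ n)) := by
        ext r; simp [Set.indicator_apply]
      rw [hind, MeasureTheory.integral_indicator measurableSet_Iic,
        Measure.restrict_restrict measurableSet_Iic]
      have hset : Set.Iic x ∩ Set.Ioc 0 s = Set.Ioc 0 x := by
        ext r
        simp only [Set.mem_inter_iff, Set.mem_Iic, Set.mem_Ioc]
        exact ⟨fun ⟨h1, h2, _⟩ => ⟨h2, h1⟩, fun ⟨h2, h1⟩ => ⟨h1, h2, h1.trans hx.2⟩⟩
      rw [hset, MeasureTheory.integral_const_mul]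
    have hR : ∀ r ∈ Set.Ioc (0:ℝ) s,
        (∫ x in Set.Ioc (0:ℝ) s, (if r ≤ x then w x * (w r * u r ^ n) else 0))
          = (w r * u r ^ n) * (u s - u r) := by
      intro r hr
      have hind : (fun x => if r ≤ x then w x * (w r * u r ^ n) else 0)
          = Set.indicator (Set.Ici r) (fun x => w x * (w r * u r ^ n)) := by
        ext x; simp [Set.indicator_apply]
      rw [hind, MeasureTheory.integral_indicator measurableSet_Ici,
        Measure.restrict_restrict measurableSet_Ici]
      have hset : Set.Ici r ∩ Set.Ioc 0 s = Set.Icc r s := by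
        ext x
        simp only [Set.mem_inter_iff, Set.mem_Ici, Set.mem_Ioc, Set.mem_Icc]
        exact ⟨fun ⟨h1, _, h2⟩ => ⟨h1, h2⟩, fun ⟨h1, h2⟩ => ⟨h1, lt_of_lt_of_le hr.1 h1, h2⟩⟩
      have husub : ∫ x in Set.Ioc r s, w x = u s - u r := by
        rw [← intervalIntegral.integral_of_le hr.2]
        exact (intervalIntegral.integral_interval_sub_left (hii 0 s) (hii 0 r)).symm
      rw [hset, integral_Icc_eq_integral_Ioc, MeasureTheory.integral_mul_const, husub,
        mul_comm]
    have hbound : ∀ r ∈ Set.Ioc (0:ℝ) s, |w r * u r ^ n| ≤ M * (M * s) ^ n := by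
      intro r hr
      rw [abs_mul, abs_pow]
      exact mul_le_mul (hbd r) (pow_le_pow_left₀ (abs_nonneg _) (hubd r ⟨hr.1.le, hr.2⟩) n)
        (pow_nonneg (abs_nonneg _) n) hM
    have hint1 : IntegrableOn (fun r => w r * u r ^ n) (Set.Ioc (0:ℝ) s) :=
      integrableOn_of_bdd hcmeas hIoc hfin hbound
    have hint2 : IntegrableOn (fun r => w r * u r ^ n * u r) (Set.Ioc (0:ℝ) s) := by
      refine integrableOn_of_bdd (hcmeas.mul humeas) hIoc hfin
        (M := M * (M * s) ^ n * (M * s)) ?_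
      intro r hr
      rw [abs_mul]
      exact mul_le_mul (hbound r hr) (hubd r ⟨hr.1.le, hr.2⟩) (abs_nonneg _)
        (mul_nonneg hM (pow_nonneg (mul_nonneg hM hs) n))
    have key : (∫ r in Set.Ioc (0:ℝ) s, w r * u r ^ (n + 1))
        = ((n:ℝ) + 1) * ((u s) * (∫ r in Set.Ioc (0:ℝ) s, w r * u r ^ n)
            - ∫ r in Set.Ioc (0:ℝ) s, w r * u r ^ (n + 1)) := by
      have e1 : (∫ r in Set.Ioc (0:ℝ) s, w r * u r ^ (n + 1))
          = ((n:ℝ) + 1) * ∫ x in Set.Ioc (0:ℝ) s,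
              (∫ r in Set.Ioc (0:ℝ) s, (if r ≤ x then w x * (w r * u r ^ n) else 0)) := by
        rw [← MeasureTheory.integral_const_mul]
        refine setIntegral_congr_fun hIoc (fun x hx => ?_)
        have hux : u x ^ (n + 1)
            = ((n:ℝ) + 1) * ∫ r in Set.Ioc (0:ℝ) x, w r * u r ^ n := ih x hx.1.le
        rw [hL x hx, hux]
        ring
      have e2 : (∫ x in Set.Ioc (0:ℝ) s,
              (∫ r in Set.Ioc (0:ℝ) s, (if r ≤ x then w x * (w r * u r ^ n) else 0)))
          = (u s) * (∫ r in Set.Ioc (0:ℝ) s, w r * u r ^ n)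
            - ∫ r in Set.Ioc (0:ℝ) s, w r * u r ^ (n + 1) := by
        rw [hswap]
        have e3 : (∫ r in Set.Ioc (0:ℝ) s, ∫ x in Set.Ioc (0:ℝ) s,
              (if r ≤ x then w x * (w r * u r ^ n) else 0))
            = ∫ r in Set.Ioc (0:ℝ) s, (u s * (w r * u r ^ n) - w r * u r ^ n * u r) := by
          refine setIntegral_congr_fun hIoc (fun r hr => ?_)
          rw [hR r hr]; ring
        rw [e3, integral_sub (hint1.const_mul (u s)) hint2,
          MeasureTheory.integral_const_mul]
        congr 1
        refine setIntegral_congr_fun hIoc (fun r _ => ?_)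
        rw [pow_succ]; ring
      calc (∫ r in Set.Ioc (0:ℝ) s, w r * u r ^ (n + 1))
          = ((n:ℝ) + 1) * ∫ x in Set.Ioc (0:ℝ) s,
              (∫ r in Set.Ioc (0:ℝ) s, (if r ≤ x then w x * (w r * u r ^ n) else 0)) := e1
        _ = ((n:ℝ) + 1) * ((u s) * (∫ r in Set.Ioc (0:ℝ) s, w r * u r ^ n)
            - ∫ r in Set.Ioc (0:ℝ) s, w r * u r ^ (n + 1)) := by rw [e2]
    have husn : u s ^ (n + 1) = ((n:ℝ) + 1) * ∫ r in Set.Ioc (0:ℝ) s, w r * u r ^ n :=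
      ih s hs
    push_cast
    linear_combination u s * husn - key

lemma exp_primitive_eq (w : ℝ → ℝ) (hw : Measurable w) {M : ℝ} (hbd : ∀ s, |w s| ≤ M)
    (t : ℝ) (ht : 0 ≤ t) :
    Real.exp (∫ r in (0:ℝ)..t, w r) - 1
      = ∫ s in (0:ℝ)..t, w s * Real.exp (∫ x in (0:ℝ)..s, w x) := by
  have hM : 0 ≤ M := le_trans (abs_nonneg _) (hbd 0)
  have hii : ∀ a b : ℝ, IntervalIntegrable w volume a b := intervalIntegrable_of_bdd hw hbd
  set u : ℝ → ℝ := fun r => ∫ x in (0:ℝ)..r, w x with hu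
  have hucont : Continuous u := intervalIntegral.continuous_primitive hii 0
  have humeas : Measurable u := hucont.measurable
  have hubd : ∀ r ∈ Set.Icc (0:ℝ) t, |u r| ≤ M * t := by
    intro r hr
    have h0 : ‖∫ x in (0:ℝ)..r, w x‖ ≤ M * |r - 0| :=
      intervalIntegral.norm_integral_le_of_norm_le_const (fun x _ => hbd x)
    rw [Real.norm_eq_abs] at h0
    calc |u r| ≤ M * |r - 0| := h0
      _ ≤ M * t := by
          rw [sub_zero, abs_of_nonneg hr.1]
          exact mul_le_mul_of_nonneg_left hr.2 hM
  have hIoc : MeasurableSet (Set.Ioc (0:ℝ) t) := measurableSet_Ioc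
  have hfin : volume (Set.Ioc (0:ℝ) t) ≠ ⊤ := measure_Ioc_lt_top.ne
  have hexp : ∀ x : ℝ, Real.exp x = ∑' n : ℕ, x ^ n / n ! := by
    intro x
    simp only [Real.exp_eq_exp_ℝ, NormedSpace.exp_eq_tsum_div]
  have hFbd : ∀ (n : ℕ), ∀ r ∈ Set.Ioc (0:ℝ) t,
      |w r * u r ^ n / n !| ≤ M * (M * t) ^ n / n ! := by
    intro n r hr
    rw [abs_div, abs_mul, abs_pow, abs_of_nonneg (by positivity : (0:ℝ) ≤ (n ! : ℝ))]
    have h1 : |w r| * |u r| ^ n ≤ M * (M * t) ^ n :=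
      mul_le_mul (hbd r)
        (pow_le_pow_left₀ (abs_nonneg _) (hubd r ⟨hr.1.le, hr.2⟩) n)
        (pow_nonneg (abs_nonneg _) n) hM
    gcongr
  have hFint : ∀ n : ℕ, IntegrableOn (fun r => w r * u r ^ n / n !) (Set.Ioc (0:ℝ) t) :=
    fun n => integrableOn_of_bdd ((hw.mul (humeas.pow_const n)).div_const _) hIoc hfin (hFbd n)
  have recur : ∀ n : ℕ,
      (∫ r in Set.Ioc (0:ℝ) t, w r * u r ^ n / n !) = u t ^ (n + 1) / (n + 1)! := by
    intro n
    have h2 : u t ^ (n + 1) = ((n:ℝ) + 1) * ∫ r in Set.Ioc (0:ℝ) t, w r * u r ^ n :=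
      pow_succ_integral_rec w hw hbd n t ht
    rw [MeasureTheory.integral_div, h2, Nat.factorial_succ]
    push_cast
    rw [mul_div_mul_left _ _ (by positivity : ((n:ℝ) + 1) ≠ 0)]
  have hsum_int : Summable fun n : ℕ => ∫ r in Set.Ioc (0:ℝ) t, ‖w r * u r ^ n / (n ! : ℝ)‖ := by
    refine Summable.of_nonneg_of_le (fun n => integral_nonneg (fun r => norm_nonneg _))
      (fun n => ?_) (((Real.summable_pow_div_factorial (M * t)).mul_left M).mul_right t)
    calc (∫ r in Set.Ioc (0:ℝ) t, ‖w r * u r ^ n / (n ! : ℝ)‖)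
        ≤ ∫ _r in Set.Ioc (0:ℝ) t, M * (M * t) ^ n / n ! := by
          refine setIntegral_mono_on (hFint n).norm
            (integrableOn_const hfin) hIoc (fun r hr => ?_)
          rw [Real.norm_eq_abs]
          exact hFbd n r hr
      _ = M * (M * t) ^ n / n ! * t := by
          rw [setIntegral_const, measureReal_def, Real.volume_Ioc, sub_zero, ENNReal.toReal_ofReal ht,
            smul_eq_mul, mul_comm]
      _ = M * ((M * t) ^ n / ↑n !) * t := by ring
  have hswap := MeasureTheory.integral_tsum_of_summable_integral_norm
    (F := fun (n : ℕ) (r : ℝ) => w r * u r ^ n / n !) (fun n => hFint n) hsum_int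
  have hRHS : (∫ s in Set.Ioc (0:ℝ) t, w s * Real.exp (u s))
      = ∑' n : ℕ, ∫ r in Set.Ioc (0:ℝ) t, w r * u r ^ n / n ! := by
    rw [hswap]
    refine setIntegral_congr_fun hIoc (fun s _ => ?_)
    rw [hexp (u s), ← tsum_mul_left]
    exact tsum_congr (fun n => (mul_div_assoc _ _ _).symm)
  have hshift : ∑' n : ℕ, ∫ r in Set.Ioc (0:ℝ) t, w r * u r ^ n / n !
      = ∑' n : ℕ, u t ^ (n + 1) / (n + 1)! := tsum_congr recur
  have hLHS : (∫ s in (0:ℝ)..t, w s * Real.exp (∫ x in (0:ℝ)..s, w x))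
      = ∫ s in Set.Ioc (0:ℝ) t, w s * Real.exp (u s) := intervalIntegral.integral_of_le ht
  rw [hLHS, hRHS, hshift]
  rw [show Real.exp (∫ r in (0:ℝ)..t, w r) = Real.exp (u t) from rfl, hexp (u t),
    Summable.tsum_eq_zero_add (Real.summable_pow_div_factorial (u t))]
  simp

lemma exp_affine_primitive (g : ℝ → ℝ) (hg : Measurable g) {C0 : ℝ} (hbd : ∀ s, |g s| ≤ C0)
    (c d t : ℝ) (ht : 0 ≤ t) :
    Real.exp (-(c * t + d * ∫ r in (0:ℝ)..t, g r)) - 1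
      = ∫ s in (0:ℝ)..t, (-(c + d * g s)) * Real.exp (-(c * s + d * ∫ r in (0:ℝ)..s, g r)) := by
  have hgii : ∀ a b : ℝ, IntervalIntegrable g volume a b := intervalIntegrable_of_bdd hg hbd
  set w : ℝ → ℝ := fun s => -(c + d * g s) with hwdef
  have hwmeas : Measurable w := (measurable_const.add (hg.const_mul d)).neg
  have hwbd : ∀ s, |w s| ≤ |c| + |d| * C0 := by
    intro s
    calc |w s| = |c + d * g s| := abs_neg _
      _ ≤ |c| + |d * g s| := abs_add_le _ _
      _ = |c| + |d| * |g s| := by rw [abs_mul]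
      _ ≤ |c| + |d| * C0 := by
          have := hbd s
          have h0 : (0:ℝ) ≤ |d| := abs_nonneg d
          nlinarith [abs_nonneg (g s)]
  have huw : ∀ s : ℝ, (∫ r in (0:ℝ)..s, w r) = -(c * s + d * ∫ r in (0:ℝ)..s, g r) := by
    intro s
    rw [show (∫ r in (0:ℝ)..s, w r) = ∫ r in (0:ℝ)..s, -(c + d * g r) from rfl,
      intervalIntegral.integral_neg,
      intervalIntegral.integral_add intervalIntegrable_const ((hgii 0 s).const_mul d),
      intervalIntegral.integral_const, intervalIntegral.integral_const_mul,
      smul_eq_mul, sub_zero, mul_comm s c]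
  have hmain := exp_primitive_eq w hwmeas hwbd t ht
  rw [huw t] at hmain
  rw [hmain]
  refine intervalIntegral.integral_congr (fun s _ => ?_)
  rw [huw s]

/-- The closed system satisfied by the limiting mean `e` and the limiting covariance `C`
of the Fourier modes of the stochastic transport-diffusion equation with constant
vector fields: with `σ²(ξ) = Σ_k ⟨σ_k,ξ⟩²`, `ρ(ξ,η) = Σ_k ⟨σ_k,ξ⟩⟨σ_k,η⟩`,
`γ(t) = ∫₀^t g` with `0 ≤ g ≤ C₀`, one has
`C(t,ξ,η) = -κ(‖ξ‖²+‖η‖²)∫₀^t C - (1/2)σ²(ξ-η)∫₀^t C g + ρ(ξ,η)∫₀^t e(·,ξ) conj(e(·,η)) g`. -/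
theorem covariance_fourier_modes_closed_equation
    {K : Type*} [Fintype K] (κ C0 : ℝ) (hκ : 0 ≤ κ) (hC0 : 0 ≤ C0)
    (σ : K → EuclideanSpace ℝ (Fin 2))
    (g : ℝ → ℝ) (hgmeas : Measurable g)
    (hg : ∀ u : ℝ, 0 ≤ u → 0 ≤ g u ∧ g u ≤ C0)
    (γ : ℝ → ℝ) (hγ : ∀ t : ℝ, γ t = ∫ u in (0:ℝ)..t, g u)
    (θ0 : EuclideanSpace ℝ (Fin 2) → ℂ)
    (e : ℝ → EuclideanSpace ℝ (Fin 2) → ℂ)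
    (he : ∀ (t : ℝ) (ξ : EuclideanSpace ℝ (Fin 2)),
      e t ξ = θ0 ξ * Complex.exp
        (Complex.ofReal (-(κ * ‖ξ‖ ^ 2 * t)
          - (1 / 2) * (∑ k, (inner ℝ (σ k) ξ : ℝ) ^ 2) * γ t)))
    (C : ℝ → EuclideanSpace ℝ (Fin 2) → EuclideanSpace ℝ (Fin 2) → ℂ)
    (hC : ∀ (t : ℝ) (ξ η : EuclideanSpace ℝ (Fin 2)),
      C t ξ η = θ0 ξ * (starRingEnd ℂ) (θ0 η) *
        Complex.exp (Complex.ofReal (-(κ * (‖ξ‖ ^ 2 + ‖η‖ ^ 2) * t))) *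
        (Complex.exp (Complex.ofReal
            (-(1 / 2) * (∑ k, (inner ℝ (σ k) (ξ - η) : ℝ) ^ 2) * γ t))
          - Complex.exp (Complex.ofReal
            (-(1 / 2) * ((∑ k, (inner ℝ (σ k) ξ : ℝ) ^ 2)
              + ∑ k, (inner ℝ (σ k) η : ℝ) ^ 2) * γ t)))) :
    ∀ (t : ℝ), 0 ≤ t → ∀ (ξ η : EuclideanSpace ℝ (Fin 2)),
      C t ξ η =
        -(Complex.ofReal (κ * (‖ξ‖ ^ 2 + ‖η‖ ^ 2))) * (∫ s in (0:ℝ)..t, C s ξ η)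
        - (Complex.ofReal ((1 / 2) * ∑ k, (inner ℝ (σ k) (ξ - η) : ℝ) ^ 2)) *
            (∫ s in (0:ℝ)..t, C s ξ η * (g s : ℂ))
        + (Complex.ofReal (∑ k, (inner ℝ (σ k) ξ : ℝ) * (inner ℝ (σ k) η : ℝ))) *
            ∫ s in (0:ℝ)..t, e s ξ * (starRingEnd ℂ) (e s η) * (g s : ℂ) := by
  intro t ht ξ η
  -- abbreviations
  set A : ℝ := κ * (‖ξ‖ ^ 2 + ‖η‖ ^ 2) with hA
  set B1 : ℝ := (1/2) * ∑ k, (inner ℝ (σ k) (ξ - η) : ℝ) ^ 2 with hB1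
  set B2 : ℝ := (1/2) * ((∑ k, (inner ℝ (σ k) ξ : ℝ) ^ 2) + ∑ k, (inner ℝ (σ k) η : ℝ) ^ 2)
    with hB2
  set P : ℝ := ∑ k, (inner ℝ (σ k) ξ : ℝ) * (inner ℝ (σ k) η : ℝ) with hP
  set z : ℂ := θ0 ξ * (starRingEnd ℂ) (θ0 η) with hz
  -- the truncated g
  set G : ℝ → ℝ := fun s => if 0 ≤ s then g s else 0 with hG
  have hGm : Measurable G := Measurable.ite measurableSet_Ici hgmeas measurable_const
  have hGbd : ∀ s, |G s| ≤ C0 := by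
    intro s
    by_cases h : 0 ≤ s
    · simp only [hG, if_pos h]
      rw [abs_of_nonneg (hg s h).1]
      exact (hg s h).2
    · simp only [hG, if_neg h, abs_zero]
      exact hC0
  have hGeq : ∀ s : ℝ, 0 ≤ s → G s = g s := fun s hs => if_pos hs
  have hγG : ∀ s : ℝ, 0 ≤ s → γ s = ∫ r in (0:ℝ)..s, G r := by
    intro s hs
    rw [hγ s, intervalIntegral.integral_of_le hs, intervalIntegral.integral_of_le hs]
    exact (setIntegral_congr_fun measurableSet_Ioc (fun r hr => hGeq r hr.1.le)).symm
  -- the two real exponential profiles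
  set F1 : ℝ → ℝ := fun s => Real.exp (-(A * s + B1 * ∫ r in (0:ℝ)..s, G r)) with hF1
  set F2 : ℝ → ℝ := fun s => Real.exp (-(A * s + B2 * ∫ r in (0:ℝ)..s, G r)) with hF2
  have hGprim : Continuous fun s : ℝ => ∫ r in (0:ℝ)..s, G r :=
    intervalIntegral.continuous_primitive (intervalIntegrable_of_bdd hGm hGbd) 0
  have hF1c : Continuous F1 :=
    Real.continuous_exp.comp
      (((continuous_const.mul continuous_id).add (continuous_const.mul hGprim)).neg)
  have hF2c : Continuous F2 :=
    Real.continuous_exp.comp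
      (((continuous_const.mul continuous_id).add (continuous_const.mul hGprim)).neg)
  have intF1 : IntervalIntegrable F1 volume 0 t := hF1c.intervalIntegrable 0 t
  have intF2 : IntervalIntegrable F2 volume 0 t := hF2c.intervalIntegrable 0 t
  have intG : IntervalIntegrable G volume 0 t := intervalIntegrable_of_bdd hGm hGbd 0 t
  have intF1g : IntervalIntegrable (fun s => F1 s * G s) volume 0 t :=
    intG.continuousOn_mul hF1c.continuousOn
  have intF2g : IntervalIntegrable (fun s => F2 s * G s) volume 0 t :=
    intG.continuousOn_mul hF2c.continuousOn
  -- relation between the quadratic forms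
  have hrho : P = B2 - B1 := by
    have hS1 : (∑ k, (inner ℝ (σ k) (ξ - η) : ℝ) ^ 2)
        = (∑ k, (inner ℝ (σ k) ξ : ℝ) ^ 2) + (∑ k, (inner ℝ (σ k) η : ℝ) ^ 2) - 2 * P := by
      rw [hP, Finset.mul_sum, ← Finset.sum_add_distrib, ← Finset.sum_sub_distrib]
      refine Finset.sum_congr rfl (fun k _ => ?_)
      rw [inner_sub_right]
      ring
    rw [hB1, hB2, hS1]
    ring
  -- pointwise identities
  have hCpt : ∀ s ∈ Set.Icc (0:ℝ) t, C s ξ η = z * Complex.ofReal (F1 s - F2 s) := by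
    intro s hs
    rw [hC s ξ η, hγG s hs.1, hz]
    rw [← Complex.ofReal_exp, ← Complex.ofReal_exp, ← Complex.ofReal_exp,
      ← Complex.ofReal_sub, mul_assoc, ← Complex.ofReal_mul]
    congr 1
    refine Complex.ofReal_inj.2 ?_
    simp only [hF1, hF2]
    rw [mul_sub, ← Real.exp_add, ← Real.exp_add]
    congr 1 <;> exact congrArg Real.exp (by ring)
  have hept : ∀ s ∈ Set.Icc (0:ℝ) t,
      e s ξ * (starRingEnd ℂ) (e s η) = z * Complex.ofReal (F2 s) := by
    intro s hs
    rw [he s ξ, he s η, hγG s hs.1]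
    rw [map_mul, ← Complex.exp_conj, Complex.conj_ofReal]
    rw [← Complex.ofReal_exp, ← Complex.ofReal_exp, hz]
    simp only [hF2]
    rw [show -(A * s + B2 * ∫ r in (0:ℝ)..s, G r)
        = (-(κ * ‖ξ‖ ^ 2 * s) - 1 / 2 * (∑ k, (inner ℝ (σ k) ξ : ℝ) ^ 2) * ∫ r in (0:ℝ)..s, G r)
          + (-(κ * ‖η‖ ^ 2 * s) - 1 / 2 * (∑ k, (inner ℝ (σ k) η : ℝ) ^ 2) * ∫ r in (0:ℝ)..s, G r)
      from by rw [hA, hB2]; ring, Real.exp_add]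
    push_cast
    ring
  -- rewrite the three complex integrals
  have huIcc : Set.uIcc (0:ℝ) t = Set.Icc (0:ℝ) t := Set.uIcc_of_le ht
  have hI1 : (∫ s in (0:ℝ)..t, C s ξ η)
      = z * Complex.ofReal (∫ s in (0:ℝ)..t, (F1 s - F2 s)) := by
    rw [intervalIntegral.integral_congr (g := fun s => z * Complex.ofReal (F1 s - F2 s))
      (fun s hs => hCpt s (by rwa [huIcc] at hs)), intervalIntegral.integral_const_mul,
      intervalIntegral.integral_ofReal]
  have hI2 : (∫ s in (0:ℝ)..t, C s ξ η * (g s : ℂ))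
      = z * Complex.ofReal (∫ s in (0:ℝ)..t, (F1 s - F2 s) * G s) := by
    rw [intervalIntegral.integral_congr
      (g := fun s => z * Complex.ofReal ((F1 s - F2 s) * G s)) ?_,
      intervalIntegral.integral_const_mul, intervalIntegral.integral_ofReal]
    intro s hs
    rw [huIcc] at hs
    dsimp only
    rw [hCpt s hs, ← hGeq s hs.1]
    push_cast
    ring
  have hI3 : (∫ s in (0:ℝ)..t, e s ξ * (starRingEnd ℂ) (e s η) * (g s : ℂ))
      = z * Complex.ofReal (∫ s in (0:ℝ)..t, F2 s * G s) := by
    rw [intervalIntegral.integral_congr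
      (g := fun s => z * Complex.ofReal (F2 s * G s)) ?_,
      intervalIntegral.integral_const_mul, intervalIntegral.integral_ofReal]
    intro s hs
    rw [huIcc] at hs
    dsimp only
    rw [hept s hs, ← hGeq s hs.1]
    push_cast
    ring
  -- the main real identity
  have key1 := exp_affine_primitive G hGm hGbd A B1 t ht
  have key2 := exp_affine_primitive G hGm hGbd A B2 t ht
  have hk1 : F1 t - 1 = -(A * ∫ s in (0:ℝ)..t, F1 s) - B1 * ∫ s in (0:ℝ)..t, F1 s * G s := by
    have e0 : F1 t - 1 = ∫ s in (0:ℝ)..t, -(A + B1 * G s) * F1 s := key1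
    rw [e0, intervalIntegral.integral_congr
      (g := fun s => (-A) * F1 s + (-B1) * (F1 s * G s)) (fun s _ => by dsimp only; ring),
      intervalIntegral.integral_add (intF1.const_mul (-A)) (intF1g.const_mul (-B1)),
      intervalIntegral.integral_const_mul, intervalIntegral.integral_const_mul]
    ring
  have hk2 : F2 t - 1 = -(A * ∫ s in (0:ℝ)..t, F2 s) - B2 * ∫ s in (0:ℝ)..t, F2 s * G s := by
    have e0 : F2 t - 1 = ∫ s in (0:ℝ)..t, -(A + B2 * G s) * F2 s := key2
    rw [e0, intervalIntegral.integral_congr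
      (g := fun s => (-A) * F2 s + (-B2) * (F2 s * G s)) (fun s _ => by dsimp only; ring),
      intervalIntegral.integral_add (intF2.const_mul (-A)) (intF2g.const_mul (-B2)),
      intervalIntegral.integral_const_mul, intervalIntegral.integral_const_mul]
    ring
  have hrmain : F1 t - F2 t
      = -A * (∫ s in (0:ℝ)..t, (F1 s - F2 s))
        - B1 * (∫ s in (0:ℝ)..t, (F1 s - F2 s) * G s)
        + P * ∫ s in (0:ℝ)..t, F2 s * G s := by
    have hsplit : (∫ s in (0:ℝ)..t, (F1 s - F2 s) * G s)
        = (∫ s in (0:ℝ)..t, F1 s * G s) - ∫ s in (0:ℝ)..t, F2 s * G s := by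
      rw [intervalIntegral.integral_congr
        (g := fun s => F1 s * G s - F2 s * G s) (fun s _ => by dsimp only; ring)]
      exact intervalIntegral.integral_sub intF1g intF2g
    rw [intervalIntegral.integral_sub intF1 intF2, hsplit, hrho]
    linear_combination hk1 - hk2
  rw [hCpt t ⟨ht, le_refl t⟩, hI1, hI2, hI3, hrmain]
  push_cast
  ring
end
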